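/- arXiv:2503.14474 — 5 statements merged into one kernel-verified Lean document; each statement's English description precedes it below -/
import Mathlib

section
/- Let r ≥ 2, let 1 ≤ k ≤ ⌊r/2⌋, let H be an F_{r,k}-hom-free r-uniform hypergraph with at least one edge, and let (X_1,…,X_r) be a random edge with uniform ordering on H with ratio sequence (x_1,…,x_r), so that 0 < x_1 ≤ … ≤ x_r = 1. Then x_i + x_j ≤ x_{i+j} for every i ∈ {1,…,k} and every integer j with i ≤ j ≤ r − i. -/
open Finset

/-- A finite hypergraph: a finite vertex set (of naturals) together with a
finite set of edges, each edge being a subset of the vertex set. -/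
structure NatHypergraph where
  verts : Finset ℕ
  edges : Finset (Finset ℕ)
  edge_sub : ∀ e ∈ edges, e ⊆ verts

namespace NatHypergraph

/-- `H` is `r`-uniform if every edge has exactly `r` vertices. -/
def IsUniform (r : ℕ) (H : NatHypergraph) : Prop := ∀ e ∈ H.edges, e.card = r

/-- `H` contains a copy of `F` (i.e. `F` is a subgraph of `H` after an injective
relabelling of the vertices of `F`). -/
def ContainsCopy (F H : NatHypergraph) : Prop :=
  ∃ f : ℕ → ℕ, Set.InjOn f ↑F.verts ∧ (∀ v ∈ F.verts, f v ∈ H.verts) ∧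
    ∀ e ∈ F.edges, e.image f ∈ H.edges

/-- `H` is `𝓕`-free: it contains no member of `𝓕` as a subgraph. -/
def Free (𝓕 : Set NatHypergraph) (H : NatHypergraph) : Prop := ∀ F ∈ 𝓕, ¬ F.ContainsCopy H

/-- `f` is a homomorphism from `F` to `H`: the image of every edge of `F` is an
edge of `H`. -/
def IsHom (f : ℕ → ℕ) (F H : NatHypergraph) : Prop :=
  (∀ v ∈ F.verts, f v ∈ H.verts) ∧ ∀ e ∈ F.edges, e.image f ∈ H.edges

/-- `H` is `𝓕`-hom-free: no member of `𝓕` admits a homomorphism to `H`. -/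
def HomFree (𝓕 : Set NatHypergraph) (H : NatHypergraph) : Prop :=
  ∀ F ∈ 𝓕, ∀ f : ℕ → ℕ, ¬ IsHom f F H

/-- The degree of a vertex: the number of edges containing it. -/
def degree (H : NatHypergraph) (v : ℕ) : ℕ := (H.edges.filter (fun e => v ∈ e)).card

/-- `H` is `r`-partite: the vertices can be coloured with `r` colours so that every
edge contains exactly one vertex of each colour. -/
def Partite (r : ℕ) (H : NatHypergraph) : Prop :=
  ∃ f : ℕ → Fin r, ∀ e ∈ H.edges, ∀ c : Fin r, (e.filter (fun v => f v = c)).card = 1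

/-- `H` and `G` are isomorphic hypergraphs. -/
def Isomorphic (H G : NatHypergraph) : Prop :=
  ∃ f : ℕ → ℕ, Set.BijOn f ↑H.verts ↑G.verts ∧ H.edges.image (Finset.image f) = G.edges

end NatHypergraph

/-- The Turán number `ex(n, 𝓕)`: the maximum number of edges in an `𝓕`-free
`r`-uniform hypergraph on `n` vertices. -/
noncomputable def exNum (r n : ℕ) (𝓕 : Set NatHypergraph) : ℕ :=
  sSup {m : ℕ | ∃ H : NatHypergraph, H.verts = Finset.range n ∧ H.IsUniform r ∧
    H.Free 𝓕 ∧ H.edges.card = m}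

/-- The Turán density `π(𝓕) = lim_{n → ∞} ex(n, 𝓕) / (n choose r)`. -/
noncomputable def turanDensity (r : ℕ) (𝓕 : Set NatHypergraph) : ℝ :=
  Filter.lim (Filter.map (fun n : ℕ => (exNum r n 𝓕 : ℝ) / (n.choose r : ℝ)) Filter.atTop)

/-- The three edges of the `(r-i,i)`-tent on vertex set `{1, …, 2r-1}`. -/
def tentEdges (r i : ℕ) : Finset (Finset ℕ) :=
  {Finset.Icc 1 r,
   Finset.Icc 1 i ∪ Finset.Icc (r + 1) (2 * r - i - 1) ∪ {2 * r - 1},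
   Finset.Icc (i + 1) r ∪ Finset.Icc (2 * r - i) (2 * r - 1)}

/-- The `(r-i,i)`-tent `Δ_{(r-i,i)}`. -/
def tent (r i : ℕ) : NatHypergraph where
  verts := Finset.Icc 1 (2 * r - 1) ∪ (tentEdges r i).biUnion id
  edges := tentEdges r i
  edge_sub := fun e he =>
    (Finset.subset_biUnion_of_mem id he).trans Finset.subset_union_right

/-- The family `𝓕_{r,k} = {Δ_{(r-i,i)} : 1 ≤ i ≤ k}`. -/
def tentFamily (r k : ℕ) : Set NatHypergraph := {H | ∃ i, 1 ≤ i ∧ i ≤ k ∧ H = tent r i}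

/-- The Lagrangian of a hypergraph: the maximum of `∑_{e ∈ E} ∏_{v ∈ e} w v` over
nonnegative vertex weightings summing to `1`. -/
noncomputable def lagrangian (H : NatHypergraph) : ℝ :=
  sSup {s : ℝ | ∃ w : ℕ → ℝ, (∀ v, 0 ≤ w v) ∧ (∑ v ∈ H.verts, w v) = 1 ∧
    s = ∑ e ∈ H.edges, ∏ v ∈ e, w v}

/-- The blowup density `b(H) = r! · L(H)`. -/
noncomputable def blowupDensity (r : ℕ) (H : NatHypergraph) : ℝ :=
  (r.factorial : ℝ) * lagrangian H

/-- Membership in the set `X_{r,k}`: `0 < x 1 ≤ x 2 ≤ ⋯ ≤ x r = 1`, and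
`x i + x j ≤ x (i+j)` whenever `1 ≤ i ≤ k` and `i ≤ j ≤ r - i`. -/
def memX (r k : ℕ) (x : ℕ → ℝ) : Prop :=
  0 < x 1 ∧ (∀ i, 1 ≤ i → i < r → x i ≤ x (i + 1)) ∧ x r = 1 ∧
    ∀ i j, 1 ≤ i → i ≤ k → i ≤ j → i + j ≤ r → x i + x j ≤ x (i + j)

/-- The interval `[L, R]` is uniform for `x`: `x i = x L + (i - L) * x 1` on it. -/
def UniformIntv (x : ℕ → ℝ) (L R : ℕ) : Prop :=
  ∀ i, L ≤ i → i ≤ R → x i = x L + ((i - L : ℕ) : ℝ) * x 1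

/-- `[L, R]` is a segment: a uniform interval (inside `[0, r]`) that is not properly
contained in any other uniform interval. -/
def IsSegment (r : ℕ) (x : ℕ → ℝ) (L R : ℕ) : Prop :=
  L ≤ R ∧ R ≤ r ∧ UniformIntv x L R ∧
    ∀ L' R', L' ≤ L → R ≤ R' → R' ≤ r → UniformIntv x L' R' → L' = L ∧ R' = R

/-- Shannon entropy (base 2) of a finitely supported distribution `p` on `s`. -/
noncomputable def ent {α : Type*} (s : Finset α) (p : α → ℝ) : ℝ :=
  ∑ a ∈ s, -(p a * Real.logb 2 (p a))

/-- Entropy of the pushforward of `p` along `g` (the entropy of `g(X)`). -/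
noncomputable def pushEnt {α β : Type*} [DecidableEq β] (s : Finset α) (p : α → ℝ)
    (g : α → β) : ℝ :=
  ent (s.image g) (fun b => ∑ a ∈ s.filter (fun a => g a = b), p a)

/-- All tuples in `V(H)^r`. -/
def tupleSpace (r : ℕ) (H : NatHypergraph) : Finset (Fin r → ℕ) :=
  Fintype.piFinset fun _ : Fin r => H.verts

/-- The joint entropy `H(X_1, …, X_r)` of a random tuple with distribution `p`. -/
noncomputable def jointEnt (r : ℕ) (H : NatHypergraph) (p : (Fin r → ℕ) → ℝ) : ℝ :=
  ent (tupleSpace r H) p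

/-- The entropy `H(X_i, X_{i+1}, …, X_r)` of the suffix starting at position `i`
(1-indexed) of a random tuple with distribution `p`. -/
noncomputable def suffixEnt (r : ℕ) (H : NatHypergraph) (p : (Fin r → ℕ) → ℝ) (i : ℕ) : ℝ :=
  pushEnt (tupleSpace r H) p (fun t (j : Fin r) => if i - 1 ≤ (j : ℕ) then t j else 0)

/-- The entropy `H(X_{j+1})` of the single coordinate `j` (0-indexed). -/
noncomputable def coordEnt (r : ℕ) (H : NatHypergraph) (p : (Fin r → ℕ) → ℝ) (j : Fin r) : ℝ :=
  pushEnt (tupleSpace r H) p (fun t => t j)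

/-- `p` is the distribution of a random edge with uniform ordering on `H`:
nonnegative, total mass one, supported on tuples whose value set is an edge, and
exchangeable (invariant under permutations of the coordinates). -/
def IsRandomEdge (r : ℕ) (H : NatHypergraph) (p : (Fin r → ℕ) → ℝ) : Prop :=
  (∀ t, 0 ≤ p t) ∧
  (∑ t ∈ tupleSpace r H, p t = 1) ∧
  (∀ t, p t ≠ 0 → Finset.image t Finset.univ ∈ H.edges) ∧
  (∀ σ : Equiv.Perm (Fin r), ∀ t, p (t ∘ σ) = p t)

/-- Every pair of distinct vertices lies in a common edge. -/
def TwoCovered (H : NatHypergraph) : Prop :=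
  ∀ u ∈ H.verts, ∀ v ∈ H.verts, u ≠ v → ∃ e ∈ H.edges, u ∈ e ∧ v ∈ e

/-- `G` is a blowup of `G0`. -/
def IsBlowup (G0 G : NatHypergraph) : Prop :=
  ∃ B : ℕ → Finset ℕ,
    (∀ v ∈ G0.verts, (B v).Nonempty) ∧
    (∀ u ∈ G0.verts, ∀ v ∈ G0.verts, u ≠ v → Disjoint (B u) (B v)) ∧
    G.verts = G0.verts.biUnion B ∧
    ∀ e : Finset ℕ, e ∈ G.edges ↔
      ∃ e0 ∈ G0.edges, e ⊆ e0.biUnion B ∧ ∀ v ∈ e0, (e ∩ B v).card = 1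

/-- `G` is symmetrised: a blowup of a 2-covered `r`-uniform hypergraph. -/
def Symmetrised (r : ℕ) (G : NatHypergraph) : Prop :=
  ∃ G0 : NatHypergraph, G0.IsUniform r ∧ TwoCovered G0 ∧ IsBlowup G0 G

/-- The family `𝓣_{r,k}` of `r`-uniform hypergraphs with exactly three edges
`A, B, C` such that `A ⊆ B ∪ C`, `(B ∩ C) \ A ≠ ∅` and `|A ∩ B| ≥ r - k`. -/
def TFamily (r k : ℕ) : Set NatHypergraph :=
  {H | H.IsUniform r ∧ ∃ A B C : Finset ℕ,
    H.verts = A ∪ B ∪ C ∧ H.edges = {A, B, C} ∧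
    A ≠ B ∧ A ≠ C ∧ B ≠ C ∧
    A ⊆ B ∪ C ∧ ((B ∩ C) \ A).Nonempty ∧ r - k ≤ (A ∩ B).card}

/-- `H` is `Lset`-intersecting: any two distinct edges intersect in a number of
vertices belonging to `Lset`. -/
def LIntersecting (Lset : Set ℕ) (H : NatHypergraph) : Prop :=
  ∀ e ∈ H.edges, ∀ e' ∈ H.edges, e ≠ e' → (e ∩ e').card ∈ Lset

/-- `H` is a `λ`-tent for the partition `lam = (λ_1, …, λ_m)` of `r`: it has
`m + 1` edges `e 0, e 1, …, e m`, each of size `r`, with `|e 0 ∩ e i| = λ_i`,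
the sets `e 0 ∩ e 1, …, e 0 ∩ e m` partitioning `e 0`, and a vertex `v` with
`e i ∩ e j = {v}` for all `1 ≤ i < j ≤ m`. -/
def IsGeneralTent (r : ℕ) (lam : List ℕ) (H : NatHypergraph) : Prop :=
  ∃ e : ℕ → Finset ℕ,
    H.verts = (Finset.range (lam.length + 1)).biUnion e ∧
    H.edges = (Finset.range (lam.length + 1)).image e ∧
    H.edges.card = lam.length + 1 ∧
    (∀ i ∈ Finset.range (lam.length + 1), (e i).card = r) ∧
    (∀ i, 1 ≤ i → i ≤ lam.length → (e 0 ∩ e i).card = lam.getD (i - 1) 0) ∧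
    e 0 = (Finset.Icc 1 lam.length).biUnion (fun i => e 0 ∩ e i) ∧
    (∀ i j, 1 ≤ i → i < j → j ≤ lam.length → Disjoint (e 0 ∩ e i) (e 0 ∩ e j)) ∧
    (∃ v : ℕ, ∀ i j, 1 ≤ i → i < j → j ≤ lam.length → e i ∩ e j = {v})

/-- The balanced complete `r`-partite `r`-uniform hypergraph `T^r(n)` on the vertex
set `{0, …, n-1}`, with parts given by residues modulo `r`: the edges are exactly
the `r`-subsets whose vertices have pairwise distinct residues mod `r`, i.e. those
meeting each part in exactly one vertex. -/
def turanGraph (r n : ℕ) : NatHypergraph where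
  verts := Finset.range n
  edges := (Finset.powersetCard r (Finset.range n)).filter
    (fun e => ∀ u ∈ e, ∀ v ∈ e, u ≠ v → u % r ≠ v % r)
  edge_sub := by
    intro e he
    simp only [Finset.mem_filter, Finset.mem_powersetCard] at he
    exact he.1.1

set_option linter.unusedSectionVars false
set_option linter.unusedVariables false
set_option maxHeartbeats 1000000

noncomputable def QQ {α β : Type*} [DecidableEq β] (s : Finset α) (p : α → ℝ)
    (g : α → β) (b : β) : ℝ := ∑ a ∈ s.filter (fun x => g x = b), p a

section generic
variable {α β γ δ : Type*} [DecidableEq β] [DecidableEq γ] [DecidableEq δ]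

lemma jensen_log (s : Finset α) (w x : α → ℝ) (h0 : ∀ a ∈ s, 0 ≤ w a)
    (h1 : ∑ a ∈ s, w a = 1) (hx : ∀ a ∈ s, w a ≠ 0 → 0 < x a) :
    ∑ a ∈ s, w a * Real.log (x a) ≤ Real.log (∑ a ∈ s, w a * x a) := by
  set M := ∑ a ∈ s, w a * x a with hM
  have hterm : ∀ a ∈ s, 0 ≤ w a * x a := by
    intro a ha
    rcases eq_or_ne (w a) 0 with h | h
    · simp [h]
    · exact mul_nonneg (h0 a ha) (hx a ha h).le
  obtain ⟨a0, ha0, hw0⟩ : ∃ a ∈ s, w a ≠ 0 := by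
    by_contra hc
    push_neg at hc
    rw [Finset.sum_congr rfl hc] at h1
    simp at h1
  have hMpos : 0 < M := by
    have : 0 < w a0 * x a0 :=
      mul_pos ((h0 a0 ha0).lt_of_ne (Ne.symm hw0)) (hx a0 ha0 hw0)
    exact lt_of_lt_of_le this (Finset.single_le_sum hterm ha0)
  have key : ∀ a ∈ s, w a * Real.log (x a) - w a * Real.log M
      ≤ w a * (x a / M) - w a := by
    intro a ha
    rcases eq_or_ne (w a) 0 with h | h
    · simp [h]
    · have hxa := hx a ha h
      have hl : Real.log (x a) - Real.log M ≤ x a / M - 1 := by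
        have := Real.log_le_sub_one_of_pos (div_pos hxa hMpos)
        rwa [Real.log_div hxa.ne' hMpos.ne'] at this
      have hwpos : 0 < w a := (h0 a ha).lt_of_ne (Ne.symm h)
      have := mul_le_mul_of_nonneg_left hl hwpos.le
      nlinarith
  have hsum := Finset.sum_le_sum key
  rw [Finset.sum_sub_distrib, Finset.sum_sub_distrib, ← Finset.sum_mul, h1] at hsum
  have hq : ∑ a ∈ s, w a * (x a / M) = 1 := by
    simp_rw [← mul_div_assoc]
    rw [← Finset.sum_div, ← hM, div_self hMpos.ne']
  rw [hq] at hsum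
  linarith
lemma jensen_logb (s : Finset α) (w x : α → ℝ) (h0 : ∀ a ∈ s, 0 ≤ w a)
    (h1 : ∑ a ∈ s, w a = 1) (hx : ∀ a ∈ s, w a ≠ 0 → 0 < x a) :
    ∑ a ∈ s, w a * Real.logb 2 (x a) ≤ Real.logb 2 (∑ a ∈ s, w a * x a) := by
  have h := jensen_log s w x h0 h1 hx
  have h2 : (0:ℝ) < Real.log 2 := Real.log_pos (by norm_num)
  simp only [Real.logb, ← mul_div_assoc]
  rw [← Finset.sum_div]
  gcongr

lemma pushEnt_eq_sum (s : Finset α) (p : α → ℝ) (g : α → β) :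
    pushEnt s p g = ∑ a ∈ s, -(p a * Real.logb 2 (QQ s p g (g a))) := by
  simp only [QQ]
  rw [pushEnt, ent]
  rw [← Finset.sum_fiberwise_of_maps_to (fun a ha => Finset.mem_image_of_mem g ha)
    (fun a => -(p a * Real.logb 2 (∑ b ∈ s.filter (fun x => g x = g a), p b)))]
  refine Finset.sum_congr rfl fun b hb => ?_
  have h1 : ∀ a ∈ s.filter (fun x => g x = b),
      -(p a * Real.logb 2 (∑ c ∈ s.filter (fun x => g x = g a), p c))
      = p a * -(Real.logb 2 (∑ c ∈ s.filter (fun x => g x = b), p c)) := by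
    intro a ha
    rw [Finset.mem_filter] at ha
    rw [ha.2]; ring
  rw [Finset.sum_congr rfl h1, ← Finset.sum_mul]
  ring

/-- reindexing under a bijection of `s` preserving `p`. -/
lemma pushEnt_precomp (s : Finset α) (p : α → ℝ) (g : α → β) (τ : α ≃ α)
    (hs : ∀ a, a ∈ s ↔ τ a ∈ s) (hp : ∀ a, p (τ a) = p a) :
    pushEnt s p (fun a => g (τ a)) = pushEnt s p g := by
  have hQ : ∀ b, (∑ a ∈ s.filter (fun a => g (τ a) = b), p a)
      = ∑ a ∈ s.filter (fun a => g a = b), p a := by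
    intro b
    apply Finset.sum_nbij' (fun a => τ a) (fun a => τ.symm a)
    · intro a ha
      rw [Finset.mem_filter] at ha ⊢
      exact ⟨(hs a).1 ha.1, ha.2⟩
    · intro a ha
      rw [Finset.mem_filter] at ha ⊢
      constructor
      · rw [hs]; simpa using ha.1
      · simpa using ha.2
    · intro a _; simp
    · intro a _; simp
    · intro a _; exact (hp a).symm
  have himg : s.image (fun a => g (τ a)) = s.image g := by
    apply Finset.Subset.antisymm
    · intro b hb
      rw [Finset.mem_image] at hb ⊢
      obtain ⟨a, ha, rfl⟩ := hb
      exact ⟨τ a, (hs a).1 ha, rfl⟩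
    · intro b hb
      rw [Finset.mem_image] at hb ⊢
      obtain ⟨a, ha, rfl⟩ := hb
      refine ⟨τ.symm a, ?_, by simp⟩
      rw [hs]; simpa using ha
  rw [pushEnt, pushEnt, himg]
  refine Finset.sum_congr rfl fun b _ => ?_
  simp only [hQ]

/-- postcomposition with a map injective on the relevant values. -/
lemma pushEnt_postcomp (s : Finset α) (p : α → ℝ) (g : α → β) (e : β → γ) (e' : γ → β)
    (he : ∀ a ∈ s, e' (e (g a)) = g a) :
    pushEnt s p (fun a => e (g a)) = pushEnt s p g := by
  have himg : s.image (fun a => e (g a)) = (s.image g).image e := by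
    rw [Finset.image_image]; rfl
  have hinj : Set.InjOn e (s.image g) := by
    intro b1 hb1 b2 hb2 hee
    rw [Finset.coe_image] at hb1 hb2
    obtain ⟨a1, ha1, rfl⟩ := hb1
    obtain ⟨a2, ha2, rfl⟩ := hb2
    rw [← he a1 ha1, ← he a2 ha2, hee]
  rw [pushEnt, pushEnt, himg, ent, ent, Finset.sum_image (fun x hx y hy h => hinj hx hy h)]
  refine Finset.sum_congr rfl fun b hb => ?_
  have : s.filter (fun a => e (g a) = e b) = s.filter (fun a => g a = b) := by
    apply Finset.filter_congr
    intro a ha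
    constructor
    · intro h
      have := he a ha
      rw [h] at this
      rw [← this]
      rw [Finset.mem_image] at hb
      obtain ⟨a2, ha2, rfl⟩ := hb
      rw [he a2 ha2]
    · intro h; rw [h]
  rw [this]


lemma QQ_nonneg (s : Finset α) (p : α → ℝ) (h0 : ∀ a, 0 ≤ p a) (g : α → β) (b : β) :
    0 ≤ QQ s p g b := Finset.sum_nonneg fun a _ => h0 a

lemma QQ_ge (s : Finset α) (p : α → ℝ) (h0 : ∀ a, 0 ≤ p a) (g : α → β) (a : α)
    (ha : a ∈ s) : p a ≤ QQ s p g (g a) := by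
  apply Finset.single_le_sum (fun b _ => h0 b)
  rw [Finset.mem_filter]; exact ⟨ha, rfl⟩

lemma core (s : Finset α) (p : α → ℝ) (U : α → γ) (V : α → β) (f : β → δ)
    (A : β → Finset γ)
    (h0 : ∀ a, 0 ≤ p a) (h1 : ∑ a ∈ s, p a = 1)
    (hA : ∀ a ∈ s, p a ≠ 0 → U a ∈ A (V a)) :
    (2:ℝ) ^ (pushEnt s p (fun a => (U a, V a)) - pushEnt s p V)
      ≤ (2:ℝ) ^ (pushEnt s p (fun a => (U a, f (V a))) - pushEnt s p (fun a => f (V a)))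
        * ∑ a ∈ s, p a * ((∑ u ∈ A (V a), QQ s p (fun b => (U b, f (V b))) (u, f (V a)))
            / QQ s p (fun b => f (V b)) (f (V a))) := by
  classical
  set s' := s.filter (fun a => p a ≠ 0) with hs'
  have hs'sub : s' ⊆ s := Finset.filter_subset _ _
  have hmem' : ∀ a ∈ s', a ∈ s ∧ p a ≠ 0 := fun a ha => Finset.mem_filter.mp ha
  have hppos : ∀ a ∈ s', 0 < p a := fun a ha =>
    ((h0 a).lt_of_ne (Ne.symm (hmem' a ha).2))
  have h1' : ∑ a ∈ s', p a = 1 := by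
    rw [hs', Finset.sum_filter_ne_zero]; exact h1
  -- abbreviations
  set QUV : α → ℝ := fun a => QQ s p (fun b => (U b, V b)) (U a, V a) with hQUV
  set QV : α → ℝ := fun a => QQ s p V (V a) with hQV
  set QUY : α → ℝ := fun a => QQ s p (fun b => (U b, f (V b))) (U a, f (V a)) with hQUY
  set QY : α → ℝ := fun a => QQ s p (fun b => f (V b)) (f (V a)) with hQY
  have hQUVpos : ∀ a ∈ s', 0 < QUV a := fun a ha =>
    lt_of_lt_of_le (hppos a ha) (QQ_ge s p h0 _ a (hmem' a ha).1)
  have hQVpos : ∀ a ∈ s', 0 < QV a := fun a ha =>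
    lt_of_lt_of_le (hppos a ha) (QQ_ge s p h0 _ a (hmem' a ha).1)
  have hQUYpos : ∀ a ∈ s', 0 < QUY a := fun a ha =>
    lt_of_lt_of_le (hppos a ha) (QQ_ge s p h0 _ a (hmem' a ha).1)
  have hQYpos : ∀ a ∈ s', 0 < QY a := fun a ha =>
    lt_of_lt_of_le (hppos a ha) (QQ_ge s p h0 _ a (hmem' a ha).1)
  set R : α → ℝ := fun a => QV a * QUY a / (QUV a * QY a) with hR
  have hRpos : ∀ a ∈ s', 0 < R a := by
    intro a ha
    exact div_pos (mul_pos (hQVpos a ha) (hQUYpos a ha))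
      (mul_pos (hQUVpos a ha) (hQYpos a ha))
  -- step 1 : identity
  have hD : (pushEnt s p (fun a => (U a, V a)) - pushEnt s p V)
      - (pushEnt s p (fun a => (U a, f (V a))) - pushEnt s p (fun a => f (V a)))
      = ∑ a ∈ s', p a * Real.logb 2 (R a) := by
    rw [pushEnt_eq_sum s p (fun a => (U a, V a)), pushEnt_eq_sum s p V,
      pushEnt_eq_sum s p (fun a => (U a, f (V a))), pushEnt_eq_sum s p (fun a => f (V a))]
    rw [← Finset.sum_sub_distrib, ← Finset.sum_sub_distrib, ← Finset.sum_sub_distrib]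
    rw [← Finset.sum_filter_of_ne (s := s)
      (f := fun a => -(p a * Real.logb 2 (QUV a)) - -(p a * Real.logb 2 (QV a))
        - (-(p a * Real.logb 2 (QUY a)) - -(p a * Real.logb 2 (QY a))))
      (p := fun a => p a ≠ 0) ?_]
    · refine Finset.sum_congr rfl fun a ha => ?_
      have h2 : (0:ℝ) < 2 := by norm_num
      rw [hR]
      rw [Real.logb_div (mul_pos (hQVpos a ha) (hQUYpos a ha)).ne'
          (mul_pos (hQUVpos a ha) (hQYpos a ha)).ne',
        Real.logb_mul (hQVpos a ha).ne' (hQUYpos a ha).ne',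
        Real.logb_mul (hQUVpos a ha).ne' (hQYpos a ha).ne']
      ring
    · intro a _ hne
      intro hpa
      apply hne
      simp [hpa]
  -- step 2 : Jensen
  set M := ∑ a ∈ s', p a * R a with hM
  have hMpos : 0 < M := by
    apply Finset.sum_pos
    · intro a ha; exact mul_pos (hppos a ha) (hRpos a ha)
    · exact Finset.nonempty_of_sum_ne_zero (by rw [h1']; norm_num)
  have hjen : ∑ a ∈ s', p a * Real.logb 2 (R a) ≤ Real.logb 2 M := by
    apply jensen_logb s' p R (fun a ha => h0 a) h1' (fun a ha _ => hRpos a ha)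
  -- step 3 : M ≤ E
  set N : β → ℝ := fun v => ∑ u ∈ A v, QQ s p (fun b => (U b, f (V b))) (u, f v) with hN
  set E := ∑ a ∈ s, p a * (N (V a) / QY a) with hE
  have hMleE : M ≤ E := by
    classical
    set t := s'.image (fun a => (U a, V a)) with ht
    set tV := t.image Prod.snd with htV
    set sV := s.image V with hsV
    -- rewrite M as a sum over (u,v) fibers
    have hQUVs' : ∀ c : γ × β, QQ s p (fun b => (U b, V b)) c
        = ∑ a ∈ s'.filter (fun x => (U x, V x) = c), p a := by
      intro c
      rw [QQ]
      apply (Finset.sum_subset (Finset.filter_subset_filter _ hs'sub) ?_).symm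
      intro x hx hx'
      rw [Finset.mem_filter] at hx
      by_contra hne
      apply hx'
      rw [Finset.mem_filter, hs', Finset.mem_filter]
      exact ⟨⟨hx.1, hne⟩, hx.2⟩
    have hM1 : M = ∑ c ∈ t, QQ s p V c.2
        * QQ s p (fun b => (U b, f (V b))) (c.1, f c.2)
        / QQ s p (fun b => f (V b)) (f c.2) := by
      rw [hM, ← Finset.sum_fiberwise_of_maps_to
        (fun a ha => Finset.mem_image_of_mem (fun a => (U a, V a)) ha)
        (fun a => p a * R a)]
      refine Finset.sum_congr rfl fun c hc => ?_
      obtain ⟨a0, ha0, hc0⟩ := Finset.mem_image.mp hc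
      have hpos0 : 0 < QQ s p (fun b => (U b, V b)) c := by
        rw [← hc0]
        exact hQUVpos a0 ha0
      have hconst : ∀ a ∈ s'.filter (fun x => (U x, V x) = c),
          p a * R a = p a * (QQ s p V c.2
            * QQ s p (fun b => (U b, f (V b))) (c.1, f c.2)
            / (QQ s p (fun b => (U b, V b)) c * QQ s p (fun b => f (V b)) (f c.2))) := by
        intro a ha
        rw [Finset.mem_filter] at ha
        have h1 : U a = c.1 := by rw [← ha.2]
        have h2 : V a = c.2 := by rw [← ha.2]
        rw [hR]
        simp only [hQV, hQUY, hQUV, hQY, h1, h2, ha.2]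
      rw [Finset.sum_congr rfl hconst, ← Finset.sum_mul, ← hQUVs' c]
      have hAne : QQ s p (fun b => (U b, V b)) c ≠ 0 := hpos0.ne'
      rcases eq_or_ne (QQ s p (fun b => f (V b)) (f c.2)) 0 with hDz | hDz
      · simp [hDz]
      · field_simp
    -- bound the inner sums
    have hNnonneg : ∀ v, 0 ≤ N v := fun v =>
      Finset.sum_nonneg fun u _ => QQ_nonneg s p h0 _ _
    have hM2 : M ≤ ∑ v ∈ tV, QQ s p V v * (N v / QQ s p (fun b => f (V b)) (f v)) := by
      rw [hM1, ← Finset.sum_fiberwise_of_maps_to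
        (fun c hc => Finset.mem_image_of_mem Prod.snd hc)
        (fun c => QQ s p V c.2 * QQ s p (fun b => (U b, f (V b))) (c.1, f c.2)
          / QQ s p (fun b => f (V b)) (f c.2))]
      apply Finset.sum_le_sum
      intro v hv
      have hinner : ∀ c ∈ t.filter (fun c => c.2 = v),
          QQ s p V c.2 * QQ s p (fun b => (U b, f (V b))) (c.1, f c.2)
            / QQ s p (fun b => f (V b)) (f c.2)
          = QQ s p V v / QQ s p (fun b => f (V b)) (f v)
            * QQ s p (fun b => (U b, f (V b))) (c.1, f v) := by
        intro c hc
        rw [Finset.mem_filter] at hc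
        rw [hc.2]
        ring
      rw [Finset.sum_congr rfl hinner, ← Finset.mul_sum]
      have himg : ∑ c ∈ t.filter (fun c => c.2 = v),
          QQ s p (fun b => (U b, f (V b))) (c.1, f v)
          = ∑ u ∈ (t.filter (fun c => c.2 = v)).image Prod.fst,
              QQ s p (fun b => (U b, f (V b))) (u, f v) := by
        rw [Finset.sum_image ?_]
        intro c1 hc1 c2 hc2 h12
        rw [Finset.mem_coe, Finset.mem_filter] at hc1 hc2
        ext
        · exact h12
        · rw [hc1.2, hc2.2]
      have hsub : (t.filter (fun c => c.2 = v)).image Prod.fst ⊆ A v := by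
        intro u hu
        rw [Finset.mem_image] at hu
        obtain ⟨c, hc, hcu⟩ := hu
        rw [Finset.mem_filter] at hc
        obtain ⟨a, ha, hac⟩ := Finset.mem_image.mp hc.1
        have hUa : U a = u := by rw [← hcu, ← hac]
        have hVa : V a = v := by rw [← hc.2, ← hac]
        rw [← hUa, ← hVa]
        exact hA a (hmem' a ha).1 (hmem' a ha).2
      have hle : ∑ c ∈ t.filter (fun c => c.2 = v),
          QQ s p (fun b => (U b, f (V b))) (c.1, f v) ≤ N v := by
        rw [himg, hN]
        apply Finset.sum_le_sum_of_subset_of_nonneg hsub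
        intro u _ _
        exact QQ_nonneg s p h0 _ _
      calc QQ s p V v / QQ s p (fun b => f (V b)) (f v)
            * ∑ c ∈ t.filter (fun c => c.2 = v),
              QQ s p (fun b => (U b, f (V b))) (c.1, f v)
          ≤ QQ s p V v / QQ s p (fun b => f (V b)) (f v) * N v := by
            apply mul_le_mul_of_nonneg_left hle
            apply div_nonneg (QQ_nonneg s p h0 _ _) (QQ_nonneg s p h0 _ _)
        _ = QQ s p V v * (N v / QQ s p (fun b => f (V b)) (f v)) := by ring
    -- rewrite E as a sum over v fibers
    have hE1 : E = ∑ v ∈ sV, QQ s p V v * (N v / QQ s p (fun b => f (V b)) (f v)) := by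
      rw [hE, ← Finset.sum_fiberwise_of_maps_to
        (fun a ha => Finset.mem_image_of_mem V ha)
        (fun a => p a * (N (V a) / QY a))]
      refine Finset.sum_congr rfl fun v hv => ?_
      have hconst : ∀ a ∈ s.filter (fun x => V x = v),
          p a * (N (V a) / QY a)
          = p a * (N v / QQ s p (fun b => f (V b)) (f v)) := by
        intro a ha
        rw [Finset.mem_filter] at ha
        simp only [hQY, ha.2]
      rw [Finset.sum_congr rfl hconst, ← Finset.sum_mul]
      simp [QQ]
    have htVsub : tV ⊆ sV := by
      intro v hv
      rw [htV, Finset.mem_image] at hv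
      obtain ⟨c, hc, hcv⟩ := hv
      obtain ⟨a, ha, hac⟩ := Finset.mem_image.mp hc
      rw [hsV, Finset.mem_image]
      exact ⟨a, hs'sub ha, by rw [← hcv, ← hac]⟩
    rw [hE1]
    apply hM2.trans
    apply Finset.sum_le_sum_of_subset_of_nonneg htVsub
    intro v _ _
    apply mul_nonneg (QQ_nonneg s p h0 _ _)
    apply div_nonneg (hNnonneg v) (QQ_nonneg s p h0 _ _)
  -- step 4 : conclude
  have hEpos : 0 < E := lt_of_lt_of_le hMpos hMleE
  have hfin : (pushEnt s p (fun a => (U a, V a)) - pushEnt s p V)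
      ≤ (pushEnt s p (fun a => (U a, f (V a))) - pushEnt s p (fun a => f (V a)))
        + Real.logb 2 E := by
    have hlogM : Real.logb 2 M ≤ Real.logb 2 E :=
      Real.logb_le_logb_of_le (by norm_num) hMpos hMleE
    have := hD.le.trans (hjen.trans hlogM)
    linarith
  calc (2:ℝ) ^ (pushEnt s p (fun a => (U a, V a)) - pushEnt s p V)
      ≤ (2:ℝ) ^ ((pushEnt s p (fun a => (U a, f (V a))) - pushEnt s p (fun a => f (V a)))
          + Real.logb 2 E) := by
        apply Real.rpow_le_rpow_of_exponent_le (by norm_num) hfin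
    _ = (2:ℝ) ^ (pushEnt s p (fun a => (U a, f (V a))) - pushEnt s p (fun a => f (V a)))
          * E := by
        rw [Real.rpow_add (by norm_num : (0:ℝ) < 2), Real.rpow_logb (by norm_num)
          (by norm_num) hEpos]
  

lemma QQ_precomp (s : Finset α) (p : α → ℝ) (g : α → β) (τ : α ≃ α)
    (hs : ∀ a, a ∈ s ↔ τ a ∈ s) (hp : ∀ a, p (τ a) = p a) (b : β) :
    QQ s p (fun a => g (τ a)) b = QQ s p g b := by
  apply Finset.sum_nbij' (fun a => τ a) (fun a => τ.symm a)
  · intro a ha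
    rw [Finset.mem_filter] at ha ⊢
    exact ⟨(hs a).1 ha.1, ha.2⟩
  · intro a ha
    rw [Finset.mem_filter] at ha ⊢
    constructor
    · rw [hs]; simpa using ha.1
    · simpa using ha.2
  · intro a _; simp
  · intro a _; simp
  · intro a _; exact (hp a).symm

end generic

-- ============ specific part ============
section spec
variable (r : ℕ) (H : NatHypergraph) (p : (Fin r → ℕ) → ℝ)

/-- mask a tuple outside `M`. -/
def sel (M : Finset (Fin r)) (t : Fin r → ℕ) : Fin r → ℕ :=
  fun m => if m ∈ M then t m else 0

/-- positions `≥ m - 1`. -/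
def Msuf (m : ℕ) : Finset (Fin r) := Finset.univ.filter (fun x : Fin r => m - 1 ≤ (x : ℕ))

lemma suffixEnt_eq (m : ℕ) :
    suffixEnt r H p m = pushEnt (tupleSpace r H) p (sel r (Msuf r m)) := by
  unfold suffixEnt
  congr 1
  funext t j
  simp [sel, Msuf]

lemma sel_sel {M M' : Finset (Fin r)} (h : M ⊆ M') (t : Fin r → ℕ) :
    sel r M (sel r M' t) = sel r M t := by
  funext m
  simp only [sel]
  by_cases hm : m ∈ M
  · simp [hm, h hm]
  · simp [hm]

lemma sel_precomp (M : Finset (Fin r)) (σ : Equiv.Perm (Fin r))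
    (hσ : ∀ m ∈ M, σ m = m) (t : Fin r → ℕ) :
    sel r M (t ∘ σ) = sel r M t := by
  funext m
  simp only [sel, Function.comp]
  by_cases hm : m ∈ M
  · simp [hm, hσ m hm]
  · simp [hm]

lemma mem_tupleSpace_iff (t : Fin r → ℕ) :
    t ∈ tupleSpace r H ↔ ∀ j, t j ∈ H.verts := by
  simp [tupleSpace, Fintype.mem_piFinset]

lemma supp_mem (hp : IsRandomEdge r H p) (t : Fin r → ℕ) (ht : p t ≠ 0) :
    t ∈ tupleSpace r H := by
  rw [mem_tupleSpace_iff]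
  intro j
  exact H.edge_sub _ (hp.2.2.1 t ht) (Finset.mem_image_of_mem t (Finset.mem_univ j))

lemma supp_inj (hp : IsRandomEdge r H p) (hunif : H.IsUniform r) (t : Fin r → ℕ)
    (ht : p t ≠ 0) : Function.Injective t := by
  have hcard : (Finset.image t Finset.univ).card = r := hunif _ (hp.2.2.1 t ht)
  have hcard2 : (Finset.image t Finset.univ).card = (Finset.univ : Finset (Fin r)).card := by
    rw [hcard]; simp
  have := Finset.card_image_iff.mp hcard2
  intro a b hab
  exact this (Finset.mem_coe.mpr (Finset.mem_univ a)) (Finset.mem_coe.mpr (Finset.mem_univ b)) hab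

/-- reindexing sums over the tuple space by precomposition with a permutation. -/
lemma sum_precomp (σ : Equiv.Perm (Fin r)) (F : (Fin r → ℕ) → ℝ) :
    ∑ t ∈ tupleSpace r H, F (t ∘ σ) = ∑ t ∈ tupleSpace r H, F t := by
  apply Finset.sum_nbij' (fun t => t ∘ σ) (fun t => t ∘ (σ.symm : Equiv.Perm (Fin r)))
  · intro t ht
    rw [mem_tupleSpace_iff] at ht ⊢
    intro j; exact ht (σ j)
  · intro t ht
    rw [mem_tupleSpace_iff] at ht ⊢
    intro j; exact ht (σ.symm j)
  · intro t _
    funext m; simp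
  · intro t _
    funext m; simp
  · intro t _
    rfl

section spec2
variable {r : ℕ} {H : NatHypergraph} {p : (Fin r → ℕ) → ℝ}

/-- precomposition with a coordinate permutation, as an equiv of tuples. -/
def cEquiv (σ : Equiv.Perm (Fin r)) : (Fin r → ℕ) ≃ (Fin r → ℕ) where
  toFun := fun t => t ∘ σ
  invFun := fun t => t ∘ σ.symm
  left_inv := by intro t; funext m; simp
  right_inv := by intro t; funext m; simp

lemma cEquiv_mem (σ : Equiv.Perm (Fin r)) (t : Fin r → ℕ) :
    t ∈ tupleSpace r H ↔ cEquiv σ t ∈ tupleSpace r H := by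
  rw [mem_tupleSpace_iff, mem_tupleSpace_iff]
  constructor
  · intro h j; exact h (σ j)
  · intro h j
    have := h (σ.symm j)
    simpa [cEquiv] using this

variable (hp : IsRandomEdge r H p)
include hp

lemma pushEnt_perm {β : Type*} [DecidableEq β] (σ : Equiv.Perm (Fin r))
    (g : (Fin r → ℕ) → β) :
    pushEnt (tupleSpace r H) p (fun t => g (t ∘ σ)) = pushEnt (tupleSpace r H) p g :=
  pushEnt_precomp (tupleSpace r H) p g (cEquiv σ) (fun t => cEquiv_mem σ t)
    (fun t => hp.2.2.2 σ t)

lemma QQ_perm {β : Type*} [DecidableEq β] (σ : Equiv.Perm (Fin r))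
    (g : (Fin r → ℕ) → β) (b : β) :
    QQ (tupleSpace r H) p (fun t => g (t ∘ σ)) b = QQ (tupleSpace r H) p g b :=
  QQ_precomp (tupleSpace r H) p g (cEquiv σ) (fun t => cEquiv_mem σ t)
    (fun t => hp.2.2.2 σ t) b

omit hp

lemma pair_split (M : Finset (Fin r)) (a : Fin r) (ha : a ∉ M) :
    pushEnt (tupleSpace r H) p (sel r (insert a M))
      = pushEnt (tupleSpace r H) p (fun t => (t a, sel r M t)) := by
  have h1 : (fun t : Fin r → ℕ => (t a, sel r M t))
      = fun t => ((fun w : Fin r → ℕ => (w a, sel r M w)) (sel r (insert a M) t)) := by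
    funext t
    simp only [sel_sel r (Finset.subset_insert a M)]
    congr 1
    simp [sel]
  rw [h1]
  apply (pushEnt_postcomp (tupleSpace r H) p (sel r (insert a M))
    (fun w : Fin r → ℕ => (w a, sel r M w))
    (fun q : ℕ × (Fin r → ℕ) => Function.update q.2 a q.1) ?_).symm
  intro t _
  funext m
  change Function.update (sel r M (sel r (insert a M) t)) a ((sel r (insert a M) t) a) m
    = sel r (insert a M) t m
  by_cases hm : m = a
  · subst hm
    simp [sel]
  · rw [Function.update_of_ne hm]
    simp only [sel, Finset.mem_insert]
    by_cases hM : m ∈ M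
    · simp [hM]
    · simp [hM, hm]

include hp

lemma pair_swap (M : Finset (Fin r)) (a b : Fin r) (ha : a ∉ M) (hb : b ∉ M) :
    pushEnt (tupleSpace r H) p (fun t => (t a, sel r M t))
      = pushEnt (tupleSpace r H) p (fun t => (t b, sel r M t)) := by
  have h1 : (fun t : Fin r → ℕ => (t a, sel r M t))
      = fun t => ((fun w : Fin r → ℕ => (w b, sel r M w)) (t ∘ Equiv.swap a b)) := by
    funext t
    simp only [Function.comp]
    congr 1
    · rw [Equiv.swap_apply_right]
    · apply (sel_precomp r M (Equiv.swap a b) ?_ t).symm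
      intro m hm
      exact Equiv.swap_apply_of_ne_of_ne (by rintro rfl; exact ha hm)
        (by rintro rfl; exact hb hm)
  rw [h1]
  exact pushEnt_perm hp (Equiv.swap a b) (fun w : Fin r → ℕ => (w b, sel r M w))

lemma QQ_pair_swap (M : Finset (Fin r)) (a b : Fin r) (ha : a ∉ M) (hb : b ∉ M)
    (c : ℕ × (Fin r → ℕ)) :
    QQ (tupleSpace r H) p (fun t => (t a, sel r M t)) c
      = QQ (tupleSpace r H) p (fun t => (t b, sel r M t)) c := by
  have h1 : (fun t : Fin r → ℕ => (t a, sel r M t))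
      = fun t => ((fun w : Fin r → ℕ => (w b, sel r M w)) (t ∘ Equiv.swap a b)) := by
    funext t
    simp only [Function.comp]
    congr 1
    · rw [Equiv.swap_apply_right]
    · apply (sel_precomp r M (Equiv.swap a b) ?_ t).symm
      intro m hm
      exact Equiv.swap_apply_of_ne_of_ne (by rintro rfl; exact ha hm)
        (by rintro rfl; exact hb hm)
  rw [h1]
  exact QQ_perm hp (Equiv.swap a b) (fun w : Fin r → ℕ => (w b, sel r M w)) c

lemma coordEnt_swap (a b : Fin r) :
    coordEnt r H p a = coordEnt r H p b := by
  unfold coordEnt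
  have h1 : (fun t : Fin r → ℕ => t a)
      = fun t => ((fun w : Fin r → ℕ => w b) (t ∘ Equiv.swap a b)) := by
    funext t
    simp [Function.comp, Equiv.swap_apply_right]
  rw [h1]
  exact pushEnt_perm hp (Equiv.swap a b) (fun w : Fin r → ℕ => w b)

end spec2


-- ============ tent configuration lemma ============

lemma image_of_equiv_block {I T : Finset ℕ} (f : ℕ → ℕ)
    (e : {x // x ∈ I} ≃ {x // x ∈ T})
    (hf : ∀ v (h : v ∈ I), f v = (e ⟨v, h⟩ : ℕ)) : I.image f = T := by
  apply Finset.Subset.antisymm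
  · intro x hx
    rw [Finset.mem_image] at hx
    obtain ⟨v, hv, rfl⟩ := hx
    rw [hf v hv]
    exact (e ⟨v, hv⟩).2
  · intro x hx
    rw [Finset.mem_image]
    refine ⟨(e.symm ⟨x, hx⟩ : ℕ), (e.symm ⟨x, hx⟩).2, ?_⟩
    rw [hf _ (e.symm ⟨x, hx⟩).2]
    simp

lemma tent_config (r k : ℕ) (hr : 2 ≤ r) (H : NatHypergraph) (hunif : H.IsUniform r)
    (hfree : H.HomFree (tentFamily r k)) (i : ℕ) (h1 : 1 ≤ i) (h2 : i ≤ k)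
    (hir : 2 * i ≤ r)
    (eA eB eC : Finset ℕ) (hA : eA ∈ H.edges) (hB : eB ∈ H.edges) (hC : eC ∈ H.edges)
    (S : Finset ℕ) (hSA : S ⊆ eA) (hSB : S ⊆ eB) (hScard : S.card = i)
    (hAC : eA \ S ⊆ eC) (u : ℕ) (huB : u ∈ eB) (huC : u ∈ eC) (huA : u ∉ eA) : False := by
  classical
  have hcA : eA.card = r := hunif eA hA
  have hcB : eB.card = r := hunif eB hB
  have hcC : eC.card = r := hunif eC hC
  have huS : u ∉ S := fun h => huA (hSA h)
  set T : Finset ℕ := eA \ S with hT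
  have hTC : T ⊆ eC := hAC
  have huT : u ∉ T := fun h => huA (Finset.mem_sdiff.mp h).1
  have hcT : T.card = r - i := by rw [hT, Finset.card_sdiff_of_subset hSA, hcA, hScard]
  have hsubB : insert u S ⊆ eB := Finset.insert_subset huB hSB
  set B' : Finset ℕ := eB \ insert u S with hB'
  have hcB' : B'.card = r - i - 1 := by
    rw [hB', Finset.card_sdiff_of_subset hsubB, hcB, Finset.card_insert_of_notMem huS, hScard]
    omega
  have hsubC : insert u T ⊆ eC := Finset.insert_subset huC hTC
  set C' : Finset ℕ := eC \ insert u T with hC'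
  have hcC' : C'.card = i - 1 := by
    rw [hC', Finset.card_sdiff_of_subset hsubC, hcC, Finset.card_insert_of_notMem huT, hcT]
    omega
  -- the four interval blocks
  set I1 := Finset.Icc 1 i with hI1
  set I2 := Finset.Icc (i+1) r with hI2
  set I3 := Finset.Icc (r+1) (2*r - i - 1) with hI3
  set I4 := Finset.Icc (2*r - i) (2*r - 2) with hI4
  have hcI1 : I1.card = S.card := by rw [hI1, Nat.card_Icc, hScard]; omega
  have hcI2 : I2.card = T.card := by rw [hI2, Nat.card_Icc, hcT]; omega
  have hcI3 : I3.card = B'.card := by rw [hI3, Nat.card_Icc, hcB']; omega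
  have hcI4 : I4.card = C'.card := by rw [hI4, Nat.card_Icc, hcC']; omega
  set e1 := Finset.equivOfCardEq hcI1 with he1
  set e2 := Finset.equivOfCardEq hcI2 with he2
  set e3 := Finset.equivOfCardEq hcI3 with he3
  set e4 := Finset.equivOfCardEq hcI4 with he4
  set f : ℕ → ℕ := fun v =>
    if h : v ∈ I1 then (e1 ⟨v, h⟩ : ℕ)
    else if h : v ∈ I2 then (e2 ⟨v, h⟩ : ℕ)
    else if h : v ∈ I3 then (e3 ⟨v, h⟩ : ℕ)
    else if h : v ∈ I4 then (e4 ⟨v, h⟩ : ℕ)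
    else u with hf
  have hf1 : ∀ v (h : v ∈ I1), f v = (e1 ⟨v, h⟩ : ℕ) := by
    intro v h; rw [hf]; simp only [dif_pos h]
  have hf2 : ∀ v (h : v ∈ I2), f v = (e2 ⟨v, h⟩ : ℕ) := by
    intro v h
    have h' : v ∉ I1 := by
      rw [hI2, Finset.mem_Icc] at h; rw [hI1, Finset.mem_Icc]; omega
    rw [hf]; simp only [dif_neg h', dif_pos h]
  have hf3 : ∀ v (h : v ∈ I3), f v = (e3 ⟨v, h⟩ : ℕ) := by
    intro v h
    have e : i + 1 ≤ r ∧ r + 1 ≤ 2*r - i - 1 + 1 := by omega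
    have h1' : v ∉ I1 := by
      rw [hI3, Finset.mem_Icc] at h; rw [hI1, Finset.mem_Icc]; omega
    have h2' : v ∉ I2 := by
      rw [hI3, Finset.mem_Icc] at h; rw [hI2, Finset.mem_Icc]; omega
    rw [hf]; simp only [dif_neg h1', dif_neg h2', dif_pos h]
  have hf4 : ∀ v (h : v ∈ I4), f v = (e4 ⟨v, h⟩ : ℕ) := by
    intro v h
    have h1' : v ∉ I1 := by
      rw [hI4, Finset.mem_Icc] at h; rw [hI1, Finset.mem_Icc]; omega
    have h2' : v ∉ I2 := by
      rw [hI4, Finset.mem_Icc] at h; rw [hI2, Finset.mem_Icc]; omega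
    have h3' : v ∉ I3 := by
      rw [hI4, Finset.mem_Icc] at h; rw [hI3, Finset.mem_Icc]; omega
    rw [hf]; simp only [dif_neg h1', dif_neg h2', dif_neg h3', dif_pos h]
  have hfu : f (2*r - 1) = u := by
    have h1' : (2*r-1) ∉ I1 := by rw [hI1, Finset.mem_Icc]; omega
    have h2' : (2*r-1) ∉ I2 := by rw [hI2, Finset.mem_Icc]; omega
    have h3' : (2*r-1) ∉ I3 := by rw [hI3, Finset.mem_Icc]; omega
    have h4' : (2*r-1) ∉ I4 := by rw [hI4, Finset.mem_Icc]; omega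
    rw [hf]; simp only [dif_neg h1', dif_neg h2', dif_neg h3', dif_neg h4']
  have him1 : I1.image f = S := image_of_equiv_block f e1 hf1
  have him2 : I2.image f = T := image_of_equiv_block f e2 hf2
  have him3 : I3.image f = B' := image_of_equiv_block f e3 hf3
  have him4 : I4.image f = C' := image_of_equiv_block f e4 hf4
  -- images of the three tent edges
  have hedge1 : (Finset.Icc 1 r).image f = eA := by
    have hsplit : Finset.Icc 1 r = I1 ∪ I2 := by
      ext v; rw [hI1, hI2]; simp only [Finset.mem_union, Finset.mem_Icc]; omega
    rw [hsplit, Finset.image_union, him1, him2, hT, Finset.union_sdiff_of_subset hSA]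
  have hedge2 : (I1 ∪ I3 ∪ {2*r - 1}).image f = eB := by
    rw [Finset.image_union, Finset.image_union, him1, him3, Finset.image_singleton, hfu]
    rw [hB']
    ext x
    simp only [Finset.mem_union, Finset.mem_sdiff, Finset.mem_insert, Finset.mem_singleton]
    constructor
    · rintro ((hx | hx) | rfl)
      · exact hSB hx
      · exact hx.1
      · exact huB
    · intro hx
      by_cases hxu : x = u
      · right; exact hxu
      · by_cases hxS : x ∈ S
        · left; left; exact hxS
        · left; right; exact ⟨hx, fun h => by tauto⟩
  have hedge3 : (I2 ∪ Finset.Icc (2*r - i) (2*r - 1)).image f = eC := by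
    have hsplit : Finset.Icc (2*r - i) (2*r - 1) = I4 ∪ {2*r - 1} := by
      ext v; rw [hI4]
      simp only [Finset.mem_union, Finset.mem_Icc, Finset.mem_singleton]; omega
    rw [Finset.image_union, hsplit, Finset.image_union, him2, him4,
      Finset.image_singleton, hfu, hC']
    ext x
    simp only [Finset.mem_union, Finset.mem_sdiff, Finset.mem_insert, Finset.mem_singleton]
    constructor
    · rintro (hx | (hx | rfl))
      · exact hTC hx
      · exact hx.1
      · exact huC
    · intro hx
      by_cases hxu : x = u
      · right; right; exact hxu
      · by_cases hxT : x ∈ T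
        · left; exact hxT
        · right; left; exact ⟨hx, fun h => by tauto⟩
  -- assemble the homomorphism
  apply hfree (tent r i) ⟨i, h1, h2, rfl⟩ f
  constructor
  · intro v hv
    have hcover : ∃ e ∈ tentEdges r i, v ∈ e := by
      have hv' : v ∈ Finset.Icc 1 (2*r - 1) ∨ v ∈ (tentEdges r i).biUnion id := by
        simpa [tent, Finset.mem_union] using hv
      rcases hv' with hv' | hv'
      · rw [Finset.mem_Icc] at hv'
        by_cases hc1 : v ≤ r
        · exact ⟨Finset.Icc 1 r, by simp [tentEdges], Finset.mem_Icc.mpr ⟨hv'.1, hc1⟩⟩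
        · by_cases hc2 : v ≤ 2*r - i - 1
          · refine ⟨Finset.Icc 1 i ∪ Finset.Icc (r+1) (2*r - i - 1) ∪ {2*r-1},
              by simp [tentEdges], ?_⟩
            simp only [Finset.mem_union, Finset.mem_Icc]
            left; right; omega
          · refine ⟨Finset.Icc (i+1) r ∪ Finset.Icc (2*r - i) (2*r - 1),
              by simp [tentEdges], ?_⟩
            simp only [Finset.mem_union, Finset.mem_Icc]
            right; omega
      · rw [Finset.mem_biUnion] at hv'
        obtain ⟨e, he, hve⟩ := hv'
        exact ⟨e, he, hve⟩
    obtain ⟨e, he, hve⟩ := hcover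
    have : e.image f ∈ H.edges := by
      have hmem : e = Finset.Icc 1 r
          ∨ e = Finset.Icc 1 i ∪ Finset.Icc (r+1) (2*r - i - 1) ∪ {2*r-1}
          ∨ e = Finset.Icc (i+1) r ∪ Finset.Icc (2*r - i) (2*r - 1) := by
        simpa only [tentEdges, Finset.mem_insert, Finset.mem_singleton] using he
      rcases hmem with rfl | rfl | rfl
      · rw [hedge1]; exact hA
      · rw [show Finset.Icc 1 i ∪ Finset.Icc (r+1) (2*r - i - 1) ∪ {2*r-1}
            = I1 ∪ I3 ∪ {2*r-1} by rw [hI1, hI3], hedge2]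
        exact hB
      · rw [show Finset.Icc (i+1) r ∪ Finset.Icc (2*r - i) (2*r - 1)
            = I2 ∪ Finset.Icc (2*r - i) (2*r - 1) by rw [hI2], hedge3]
        exact hC
    exact H.edge_sub _ this (Finset.mem_image_of_mem f hve)
  · intro e he
    have hmem : e = Finset.Icc 1 r
        ∨ e = Finset.Icc 1 i ∪ Finset.Icc (r+1) (2*r - i - 1) ∪ {2*r-1}
        ∨ e = Finset.Icc (i+1) r ∪ Finset.Icc (2*r - i) (2*r - 1) := by
      simpa only [tent, tentEdges, Finset.mem_insert, Finset.mem_singleton] using he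
    rcases hmem with rfl | rfl | rfl
    · rw [hedge1]; exact hA
    · rw [show Finset.Icc 1 i ∪ Finset.Icc (r+1) (2*r - i - 1) ∪ {2*r-1}
          = I1 ∪ I3 ∪ {2*r-1} by rw [hI1, hI3], hedge2]
      exact hB
    · rw [show Finset.Icc (i+1) r ∪ Finset.Icc (2*r - i) (2*r - 1)
          = I2 ∪ Finset.Icc (2*r - i) (2*r - 1) by rw [hI2], hedge3]
      exact hC

-- ============ more helpers ============

lemma card_filter_lt_fin (r i : ℕ) (h : i ≤ r) :
    ((Finset.univ : Finset (Fin r)).filter (fun m : Fin r => (m : ℕ) < i)).card = i := by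
  have himg : ((Finset.univ : Finset (Fin r)).filter
      (fun m : Fin r => (m : ℕ) < i)).image Fin.val = Finset.range i := by
    ext x
    simp only [Finset.mem_image, Finset.mem_filter, Finset.mem_univ, true_and,
      Finset.mem_range]
    constructor
    · rintro ⟨a, ha, rfl⟩; exact ha
    · intro hx; exact ⟨⟨x, lt_of_lt_of_le hx h⟩, hx, rfl⟩
  calc ((Finset.univ : Finset (Fin r)).filter (fun m : Fin r => (m : ℕ) < i)).card
      = (((Finset.univ : Finset (Fin r)).filter
          (fun m : Fin r => (m : ℕ) < i)).image Fin.val).card :=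
        (Finset.card_image_of_injective _ Fin.val_injective).symm
    _ = (Finset.range i).card := by rw [himg]
    _ = i := Finset.card_range i

def shiftPerm (r m i : ℕ) (h0 : 0 < m) (hmr : m ≤ r) (him : i ≤ m) : Equiv.Perm (Fin r) where
  toFun := fun a => if (a : ℕ) < m then
    ⟨((a : ℕ) + i) % m, lt_of_lt_of_le (Nat.mod_lt _ h0) hmr⟩ else a
  invFun := fun a => if (a : ℕ) < m then
    ⟨((a : ℕ) + (m - i)) % m, lt_of_lt_of_le (Nat.mod_lt _ h0) hmr⟩ else a
  left_inv := by
    intro a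
    by_cases ha : (a : ℕ) < m
    · simp only [ha, if_pos]
      have hlt : ((a : ℕ) + i) % m < m := Nat.mod_lt _ h0
      rw [if_pos hlt]
      apply Fin.ext
      simp only
      rw [Nat.mod_add_mod]
      have : (a : ℕ) + i + (m - i) = (a : ℕ) + m := by omega
      rw [this, Nat.add_mod_right, Nat.mod_eq_of_lt ha]
    · simp only [if_neg ha]
  right_inv := by
    intro a
    by_cases ha : (a : ℕ) < m
    · simp only [ha, if_pos]
      have hlt : ((a : ℕ) + (m - i)) % m < m := Nat.mod_lt _ h0
      rw [if_pos hlt]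
      apply Fin.ext
      simp only
      rw [Nat.mod_add_mod]
      have : (a : ℕ) + (m - i) + i = (a : ℕ) + m := by omega
      rw [this, Nat.add_mod_right, Nat.mod_eq_of_lt ha]
    · simp only [if_neg ha]

lemma shiftPerm_apply_of_ge (r m i : ℕ) (h0 : 0 < m) (hmr : m ≤ r) (him : i ≤ m)
    (a : Fin r) (ha : m ≤ (a : ℕ)) : shiftPerm r m i h0 hmr him a = a := by
  simp only [shiftPerm, Equiv.coe_fn_mk]
  rw [if_neg (by omega)]

lemma shiftPerm_apply_of_lt (r m i : ℕ) (h0 : 0 < m) (hmr : m ≤ r) (him : i ≤ m)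
    (a : Fin r) (ha : (a : ℕ) < m) :
    ((shiftPerm r m i h0 hmr him a : Fin r) : ℕ) = ((a : ℕ) + i) % m := by
  simp only [shiftPerm, Equiv.coe_fn_mk]
  rw [if_pos ha]

section sumq
variable {r : ℕ} {H : NatHypergraph} {p : (Fin r → ℕ) → ℝ}

lemma sumQ_eq (hp0 : ∀ t, 0 ≤ p t) (C : Finset (Fin r)) (a : Fin r) (B : Finset ℕ)
    (y : Fin r → ℕ) :
    ∑ u ∈ B, QQ (tupleSpace r H) p (fun b => (b a, sel r C b)) (u, y)
      = ∑ t ∈ (tupleSpace r H).filter (fun t => sel r C t = y ∧ t a ∈ B), p t := by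
  classical
  unfold QQ
  simp only [Finset.sum_filter]
  rw [Finset.sum_comm]
  refine Finset.sum_congr rfl fun t _ => ?_
  by_cases hy : sel r C t = y
  · have : ∀ u ∈ B, (if (t a, sel r C t) = (u, y) then p t else 0)
        = if u = t a then p t else 0 := by
      intro u _
      congr 1
      simp only [Prod.mk.injEq, hy, and_true, eq_self_iff_true]
      exact propext eq_comm
    rw [Finset.sum_congr rfl this, Finset.sum_ite_eq' B (t a) (fun _ => p t)]
    simp [hy]
  · have : ∀ u ∈ B, (if (t a, sel r C t) = (u, y) then p t else 0) = 0 := by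
      intro u _
      rw [if_neg]
      simp only [Prod.mk.injEq]
      tauto
    rw [Finset.sum_congr rfl this]
    simp [hy]
end sumq


/-- **Lemma 2.12 (key entropy inequality).** Let `2 ≤ r`, `1 ≤ k ≤ ⌊r/2⌋`, let `H` be an
`𝓕_{r,k}`-hom-free `r`-uniform hypergraph with at least one edge, and let `p` be (the
distribution of) a random edge with uniform ordering on `H`, with ratio sequence `x`
(so `x i = 2^{H(X_i ∣ X_{i+1}, …, X_r) − H(X_i)}`). Then `x i + x j ≤ x (i+j)` for all
`1 ≤ i ≤ k` and `i ≤ j ≤ r − i`. -/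
theorem ratio_seq_superadditive (r k : ℕ) (hr : 2 ≤ r) (hk1 : 1 ≤ k) (hk2 : k ≤ r / 2)
    (H : NatHypergraph) (hunif : H.IsUniform r) (hne : H.edges.Nonempty)
    (hfree : H.HomFree (tentFamily r k))
    (p : (Fin r → ℕ) → ℝ) (hp : IsRandomEdge r H p)
    (x : ℕ → ℝ)
    (hx : ∀ i, 1 ≤ i → i ≤ r → ∀ h : i - 1 < r,
      x i = (2 : ℝ) ^ (suffixEnt r H p i - suffixEnt r H p (i + 1)
        - coordEnt r H p ⟨i - 1, h⟩)) :
    ∀ i j, 1 ≤ i → i ≤ k → i ≤ j → i + j ≤ r → x i + x j ≤ x (i + j) := by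
  intro i j h1i hik hij hijr
  set m := i + j with hm
  have hp0 := hp.1
  have hp1 := hp.2.1
  have hedge := hp.2.2.1
  have h1j : 1 ≤ j := le_trans h1i hij
  have him : i < m := by omega
  have hjm : j < m := by omega
  have h1m : 1 ≤ m := by omega
  have hmr : m ≤ r := hijr
  have h2i : 2 * i ≤ r := by omega
  have hi1r : i - 1 < r := by omega
  have hj1r : j - 1 < r := by omega
  have hm1r : m - 1 < r := by omega
  set TS := tupleSpace r H with hTS
  set posI : Fin r := ⟨i - 1, hi1r⟩ with hposI
  set posJ : Fin r := ⟨j - 1, hj1r⟩ with hposJ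
  set posM : Fin r := ⟨m - 1, hm1r⟩ with hposM
  set MI : Finset (Fin r) := Msuf r (i+1) with hMI
  set MJ : Finset (Fin r) := Msuf r (j+1) with hMJ
  set C : Finset (Fin r) := Msuf r (m+1) with hC
  set M2 : Finset (Fin r) :=
    Finset.univ.filter (fun a : Fin r => (a : ℕ) < i ∨ m ≤ (a : ℕ)) with hM2
  have hmemMI : ∀ a : Fin r, a ∈ MI ↔ i ≤ (a : ℕ) := by
    intro a; simp [hMI, Msuf]
  have hmemMJ : ∀ a : Fin r, a ∈ MJ ↔ j ≤ (a : ℕ) := by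
    intro a; simp [hMJ, Msuf]
  have hmemC : ∀ a : Fin r, a ∈ C ↔ m ≤ (a : ℕ) := by
    intro a; simp [hC, Msuf]
  have hCMI : C ⊆ MI := by
    intro a ha; rw [hmemC] at ha; rw [hmemMI]; omega
  have hCMJ : C ⊆ MJ := by
    intro a ha; rw [hmemC] at ha; rw [hmemMJ]; omega
  have hposIMI : posI ∉ MI := by rw [hmemMI]; simp [hposI]; omega
  have hposJMJ : posJ ∉ MJ := by rw [hmemMJ]; simp [hposJ]; omega
  have hposIC : posI ∉ C := by rw [hmemC]; simp [hposI]; omega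
  have hposJC : posJ ∉ C := by rw [hmemC]; simp [hposJ]; omega
  have hposMC : posM ∉ C := by rw [hmemC]; simp [hposM]; omega
  -- N and E quantities
  set Qp : ℕ → (Fin r → ℕ) → ℝ :=
    fun u y => QQ TS p (fun b => (b posM, sel r C b)) (u, y) with hQp
  set QYv : (Fin r → ℕ) → ℝ := fun y => QQ TS p (fun b => sel r C b) y with hQYv
  set AI : (Fin r → ℕ) → Finset ℕ := fun v =>
    ((H.edges.filter (fun e => ∀ z ∈ MI.image v, z ∈ e)).biUnion id) \ MI.image v with hAI
  set AJ : (Fin r → ℕ) → Finset ℕ := fun v =>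
    ((H.edges.filter (fun e => ∀ z ∈ MJ.image v, z ∈ e)).biUnion id) \ MJ.image v with hAJ
  set A2 : (Fin r → ℕ) → Finset ℕ := fun v =>
    ((H.edges.filter (fun e => ∀ z ∈ M2.image v, z ∈ e)).biUnion id) \ M2.image v with hA2
  set E1 : ℝ := ∑ t ∈ TS, p t * ((∑ u ∈ AI t, Qp u (sel r C t)) / QYv (sel r C t)) with hE1
  set E2 : ℝ := ∑ t ∈ TS, p t * ((∑ u ∈ A2 t, Qp u (sel r C t)) / QYv (sel r C t)) with hE2
  -- step 1
  have himgMI : ∀ w : Fin r → ℕ, MI.image (sel r MI w) = MI.image w := by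
    intro w
    apply Finset.image_congr
    intro a ha
    rw [Finset.mem_coe] at ha
    simp [sel, ha]
  have hAIsel : ∀ w : Fin r → ℕ, AI (sel r MI w) = AI w := by
    intro w
    rw [hAI]
    simp only [himgMI]
  have hselCI : ∀ w : Fin r → ℕ, sel r C (sel r MI w) = sel r C w :=
    fun w => sel_sel r hCMI w
  have hA1 : ∀ t ∈ TS, p t ≠ 0 → t posI ∈ AI (sel r MI t) := by
    intro t ht hpt
    have hinj := supp_inj r H p hp hunif t hpt
    have he := hedge t hpt
    rw [hAIsel]
    rw [hAI]
    rw [Finset.mem_sdiff]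
    constructor
    · rw [Finset.mem_biUnion]
      refine ⟨Finset.image t Finset.univ, ?_, ?_⟩
      · rw [Finset.mem_filter]
        refine ⟨he, ?_⟩
        intro z hz
        obtain ⟨a, _, rfl⟩ := Finset.mem_image.mp hz
        exact Finset.mem_image_of_mem t (Finset.mem_univ a)
      · exact Finset.mem_image_of_mem t (Finset.mem_univ posI)
    · intro hmem
      obtain ⟨a, haMI, heq⟩ := Finset.mem_image.mp hmem
      exact hposIMI (hinj heq ▸ haMI)
  have step1 : (2:ℝ) ^ (suffixEnt r H p i - suffixEnt r H p (i+1))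
      ≤ (2:ℝ) ^ (suffixEnt r H p m - suffixEnt r H p (m+1)) * E1 := by
    have key1 := core TS p (fun t => t posI) (sel r MI) (sel r C) AI hp0 hp1 hA1
    simp only [hselCI, hAIsel] at key1
    have hQQswap : ∀ c : ℕ × (Fin r → ℕ),
        QQ (tupleSpace r H) p (fun t => (t posI, sel r C t)) c
          = QQ (tupleSpace r H) p (fun t => (t posM, sel r C t)) c :=
      QQ_pair_swap hp C posI posM hposIC hposMC
    rw [← hTS] at hQQswap
    simp only [hQQswap] at key1
    have hbi1 : suffixEnt r H p i
        = pushEnt TS p (fun a : Fin r → ℕ => (a posI, sel r MI a)) := by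
      rw [suffixEnt_eq]
      have hins : Msuf r i = insert posI MI := by
        ext a
        simp only [Msuf, hMI, Finset.mem_filter, Finset.mem_univ, true_and,
          Finset.mem_insert, Fin.ext_iff, hposI]
        omega
      rw [hins, ← hTS, pair_split MI posI hposIMI]
    have hbi2 : suffixEnt r H p (i+1) = pushEnt TS p (sel r MI) := by
      rw [suffixEnt_eq, ← hMI, ← hTS]
    have hbm1 : suffixEnt r H p m
        = pushEnt TS p (fun a : Fin r → ℕ => (a posI, sel r C a)) := by
      rw [suffixEnt_eq]
      have hins : Msuf r m = insert posM C := by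
        ext a
        simp only [Msuf, hC, Finset.mem_filter, Finset.mem_univ, true_and,
          Finset.mem_insert, Fin.ext_iff, hposM]
        omega
      rw [hins, ← hTS, pair_split C posM hposMC, pair_swap hp C posM posI hposMC hposIC]
    have hbm2 : suffixEnt r H p (m+1) = pushEnt TS p (sel r C) := by
      rw [suffixEnt_eq, ← hC, ← hTS]
    rw [hbi1, hbi2, hbm1, hbm2, hE1]
    simp only [hQp, hQYv]
    exact key1
  -- step 2
  have himgMJ : ∀ w : Fin r → ℕ, MJ.image (sel r MJ w) = MJ.image w := by
    intro w
    apply Finset.image_congr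
    intro a ha
    rw [Finset.mem_coe] at ha
    simp [sel, ha]
  have hAJsel : ∀ w : Fin r → ℕ, AJ (sel r MJ w) = AJ w := by
    intro w
    rw [hAJ]
    simp only [himgMJ]
  have hselCJ : ∀ w : Fin r → ℕ, sel r C (sel r MJ w) = sel r C w :=
    fun w => sel_sel r hCMJ w
  have hA1J : ∀ t ∈ TS, p t ≠ 0 → t posJ ∈ AJ (sel r MJ t) := by
    intro t ht hpt
    have hinj := supp_inj r H p hp hunif t hpt
    have he := hedge t hpt
    rw [hAJsel]
    rw [hAJ]
    rw [Finset.mem_sdiff]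
    constructor
    · rw [Finset.mem_biUnion]
      refine ⟨Finset.image t Finset.univ, ?_, ?_⟩
      · rw [Finset.mem_filter]
        refine ⟨he, ?_⟩
        intro z hz
        obtain ⟨a, _, rfl⟩ := Finset.mem_image.mp hz
        exact Finset.mem_image_of_mem t (Finset.mem_univ a)
      · exact Finset.mem_image_of_mem t (Finset.mem_univ posJ)
    · intro hmem
      obtain ⟨a, haMJ, heq⟩ := Finset.mem_image.mp hmem
      exact hposJMJ (hinj heq ▸ haMJ)
  -- the shift permutation
  have hm0 : 0 < m := by omega
  have him2 : i ≤ m := by omega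
  set σ : Equiv.Perm (Fin r) := shiftPerm r m i hm0 hmr him2 with hσ
  have hσC : ∀ a ∈ C, σ a = a := by
    intro a ha
    rw [hmemC] at ha
    exact shiftPerm_apply_of_ge r m i hm0 hmr him2 a ha
  have hMJσ : MJ.image σ = M2 := by
    ext a
    rw [hM2, Finset.mem_image]
    simp only [Finset.mem_filter, Finset.mem_univ, true_and]
    constructor
    · rintro ⟨b, hb, rfl⟩
      rw [hmemMJ] at hb
      by_cases hbm : (b : ℕ) < m
      · left
        rw [hσ, shiftPerm_apply_of_lt r m i hm0 hmr him2 b hbm]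
        rw [Nat.mod_eq_sub_mod (by omega : m ≤ (b : ℕ) + i), Nat.mod_eq_of_lt (by omega)]
        omega
      · right
        rw [hσ, shiftPerm_apply_of_ge r m i hm0 hmr him2 b (by omega)]
        omega
    · intro ha
      rcases ha with ha | ha
      · refine ⟨⟨(a : ℕ) + j, by omega⟩, ?_, ?_⟩
        · rw [hmemMJ]; simp
        · rw [hσ]
          apply Fin.ext
          rw [shiftPerm_apply_of_lt r m i hm0 hmr him2 _ (by simp; omega)]
          simp only
          have htmp : (a : ℕ) + j + i = (a : ℕ) + m := by omega
          rw [htmp, Nat.add_mod_right, Nat.mod_eq_of_lt (by omega)]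
      · refine ⟨a, ?_, ?_⟩
        · rw [hmemMJ]; omega
        · rw [hσ]
          exact shiftPerm_apply_of_ge r m i hm0 hmr him2 a ha
  have hAJσ : ∀ t : Fin r → ℕ, AJ (t ∘ σ) = A2 t := by
    intro t
    have himg : MJ.image (t ∘ σ) = M2.image t := by
      rw [← Finset.image_image, hMJσ]
    rw [hAJ, hA2]
    simp only [himg]
  have hselCσ : ∀ t : Fin r → ℕ, sel r C (t ∘ σ) = sel r C t :=
    fun t => sel_precomp r C σ hσC t
  have step2 : (2:ℝ) ^ (suffixEnt r H p j - suffixEnt r H p (j+1))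
      ≤ (2:ℝ) ^ (suffixEnt r H p m - suffixEnt r H p (m+1)) * E2 := by
    have key2 := core TS p (fun t => t posJ) (sel r MJ) (sel r C) AJ hp0 hp1 hA1J
    simp only [hselCJ, hAJsel] at key2
    have hQQswap : ∀ c : ℕ × (Fin r → ℕ),
        QQ (tupleSpace r H) p (fun t => (t posJ, sel r C t)) c
          = QQ (tupleSpace r H) p (fun t => (t posM, sel r C t)) c :=
      QQ_pair_swap hp C posJ posM hposJC hposMC
    rw [← hTS] at hQQswap
    simp only [hQQswap] at key2
    have hbj1 : suffixEnt r H p j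
        = pushEnt TS p (fun a : Fin r → ℕ => (a posJ, sel r MJ a)) := by
      rw [suffixEnt_eq]
      have hins : Msuf r j = insert posJ MJ := by
        ext a
        simp only [Msuf, hMJ, Finset.mem_filter, Finset.mem_univ, true_and,
          Finset.mem_insert, Fin.ext_iff, hposJ]
        omega
      rw [hins, ← hTS, pair_split MJ posJ hposJMJ]
    have hbj2 : suffixEnt r H p (j+1) = pushEnt TS p (sel r MJ) := by
      rw [suffixEnt_eq, ← hMJ, ← hTS]
    have hbm1 : suffixEnt r H p m
        = pushEnt TS p (fun a : Fin r → ℕ => (a posJ, sel r C a)) := by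
      rw [suffixEnt_eq]
      have hins : Msuf r m = insert posM C := by
        ext a
        simp only [Msuf, hC, Finset.mem_filter, Finset.mem_univ, true_and,
          Finset.mem_insert, Fin.ext_iff, hposM]
        omega
      rw [hins, ← hTS, pair_split C posM hposMC, pair_swap hp C posM posJ hposMC hposJC]
    have hbm2 : suffixEnt r H p (m+1) = pushEnt TS p (sel r C) := by
      rw [suffixEnt_eq, ← hC, ← hTS]
    rw [hbj1, hbj2, hbm1, hbm2]
    have hE2eq : (∑ a ∈ TS, p a * ((∑ u ∈ AJ a,
          QQ TS p (fun t => (t posM, sel r C t)) (u, sel r C a))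
            / QQ TS p (fun t => sel r C t) (sel r C a))) = E2 := by
      rw [hE2]
      simp only [hQp, hQYv]
      rw [← sum_precomp r H σ (fun t => p t * ((∑ u ∈ AJ t,
        QQ TS p (fun b => (b posM, sel r C b)) (u, sel r C t))
          / QQ TS p (fun b => sel r C b) (sel r C t))), ← hTS]
      refine Finset.sum_congr rfl fun t _ => ?_
      simp only [hp.2.2.2 σ t, hAJσ t, hselCσ t]
    rw [← hE2eq]
    exact key2

  -- step 3
  have step3 : E1 + E2 ≤ 1 := by
    rw [hE1, hE2, ← Finset.sum_add_distrib, ← hp1]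
    apply Finset.sum_le_sum
    intro t ht
    rcases eq_or_ne (p t) 0 with hpt | hpt
    · simp [hpt]
    have hinj := supp_inj r H p hp hunif t hpt
    have heA := hedge t hpt
    have hQYpos : 0 < QYv (sel r C t) := by
      apply lt_of_lt_of_le ((hp0 t).lt_of_ne (Ne.symm hpt))
      rw [hQYv]
      exact QQ_ge TS p hp0 (fun b => sel r C b) t ht
    -- disjointness of the two A-sets via tent-freeness
    have hdisjB : ∀ u, u ∈ AI t → u ∈ A2 t → False := by
      intro u hu1 hu2
      rw [hAI, Finset.mem_sdiff, Finset.mem_biUnion] at hu1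
      obtain ⟨⟨eC, heCf, huC⟩, hu1n⟩ := hu1
      rw [Finset.mem_filter] at heCf
      obtain ⟨heC, hCcont⟩ := heCf
      rw [hA2, Finset.mem_sdiff, Finset.mem_biUnion] at hu2
      obtain ⟨⟨eB, heBf, huB⟩, hu2n⟩ := hu2
      rw [Finset.mem_filter] at heBf
      obtain ⟨heB, hBcont⟩ := heBf
      set eA := Finset.image t Finset.univ with heAset
      set Sset := (Finset.univ.filter (fun a : Fin r => (a : ℕ) < i)).image t with hSset
      have hSA : Sset ⊆ eA := by
        rw [hSset, heAset]
        exact Finset.image_subset_image (Finset.filter_subset _ _)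
      have hfiltM2 : (Finset.univ.filter (fun a : Fin r => (a : ℕ) < i)) ⊆ M2 := by
        intro a ha
        rw [Finset.mem_filter] at ha
        rw [hM2, Finset.mem_filter]
        exact ⟨Finset.mem_univ a, Or.inl ha.2⟩
      have hSB : Sset ⊆ eB := by
        intro z hz
        apply hBcont
        rw [hSset] at hz
        obtain ⟨a, ha, rfl⟩ := Finset.mem_image.mp hz
        exact Finset.mem_image_of_mem t (hfiltM2 ha)
      have hScard : Sset.card = i := by
        rw [hSset, Finset.card_image_of_injective _ hinj]
        exact card_filter_lt_fin r i (by omega)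
      have hAC : eA \ Sset ⊆ eC := by
        intro z hz
        rw [Finset.mem_sdiff, heAset] at hz
        obtain ⟨hz1, hzn⟩ := hz
        obtain ⟨a, _, rfl⟩ := Finset.mem_image.mp hz1
        apply hCcont
        apply Finset.mem_image_of_mem
        rw [hmemMI]
        by_contra hcon
        push_neg at hcon
        exact hzn (by
          rw [hSset]
          exact Finset.mem_image_of_mem t (Finset.mem_filter.mpr
            ⟨Finset.mem_univ a, by omega⟩))
      have huB' : u ∈ eB := huB
      have huC' : u ∈ eC := huC
      have huA : u ∉ eA := by
        intro hcon
        rw [heAset] at hcon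
        obtain ⟨a, _, rfl⟩ := Finset.mem_image.mp hcon
        by_cases hai : (a : ℕ) < i
        · apply hu2n
          apply Finset.mem_image_of_mem
          rw [hM2, Finset.mem_filter]
          exact ⟨Finset.mem_univ a, Or.inl hai⟩
        · apply hu1n
          apply Finset.mem_image_of_mem
          rw [hmemMI]
          omega
      exact tent_config r k hr H hunif hfree i h1i hik h2i eA eB eC heA heB heC
        Sset hSA hSB hScard hAC u huB' huC' huA
    -- sum bound
    have hsum_le : (∑ u ∈ AI t, Qp u (sel r C t)) + (∑ u ∈ A2 t, Qp u (sel r C t))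
        ≤ QYv (sel r C t) := by
      simp only [hQp]
      rw [sumQ_eq hp0 C posM (AI t) (sel r C t), sumQ_eq hp0 C posM (A2 t) (sel r C t)]
      have hdisjF : Disjoint
          ((tupleSpace r H).filter (fun w => sel r C w = sel r C t ∧ w posM ∈ AI t))
          ((tupleSpace r H).filter (fun w => sel r C w = sel r C t ∧ w posM ∈ A2 t)) := by
        rw [Finset.disjoint_left]
        intro w hw1 hw2
        rw [Finset.mem_filter] at hw1 hw2
        exact hdisjB (w posM) hw1.2.2 hw2.2.2
      rw [← Finset.sum_union hdisjF]
      rw [hQYv]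
      unfold QQ
      apply Finset.sum_le_sum_of_subset_of_nonneg
      · intro w hw
        rw [Finset.mem_union, Finset.mem_filter, Finset.mem_filter] at hw
        rw [Finset.mem_filter]
        rcases hw with hw | hw
        · exact ⟨hw.1, hw.2.1⟩
        · exact ⟨hw.1, hw.2.1⟩
      · intro w _ _
        exact hp0 w
    calc p t * ((∑ u ∈ AI t, Qp u (sel r C t)) / QYv (sel r C t))
        + p t * ((∑ u ∈ A2 t, Qp u (sel r C t)) / QYv (sel r C t))
        = p t * (((∑ u ∈ AI t, Qp u (sel r C t))
            + (∑ u ∈ A2 t, Qp u (sel r C t))) / QYv (sel r C t)) := by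
          rw [← mul_add, ← add_div]
      _ ≤ p t * 1 := by
          apply mul_le_mul_of_nonneg_left ?_ (hp0 t)
          rw [div_le_one hQYpos]
          exact hsum_le
      _ = p t := mul_one _

  -- conclusion
  have hcoordI : coordEnt r H p ⟨i - 1, hi1r⟩ = coordEnt r H p posM := coordEnt_swap hp _ _
  have hcoordJ : coordEnt r H p ⟨j - 1, hj1r⟩ = coordEnt r H p posM := coordEnt_swap hp _ _
  have hE1nn : 0 ≤ E1 := by
    apply Finset.sum_nonneg
    intro t _
    apply mul_nonneg (hp0 t)
    apply div_nonneg
    · exact Finset.sum_nonneg fun u _ => Finset.sum_nonneg fun a _ => hp0 a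
    · exact Finset.sum_nonneg fun a _ => hp0 a
  have hE2nn : 0 ≤ E2 := by
    apply Finset.sum_nonneg
    intro t _
    apply mul_nonneg (hp0 t)
    apply div_nonneg
    · exact Finset.sum_nonneg fun u _ => Finset.sum_nonneg fun a _ => hp0 a
    · exact Finset.sum_nonneg fun a _ => hp0 a
  rw [hx i h1i (by omega) hi1r, hx j h1j (by omega) hj1r, hx m h1m (by omega) hm1r]
  rw [hcoordI, hcoordJ, ← hposM]
  have h2pos : (0:ℝ) < 2 := by norm_num
  set c := coordEnt r H p posM with hc
  set si := suffixEnt r H p i - suffixEnt r H p (i+1) with hsi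
  set sj := suffixEnt r H p j - suffixEnt r H p (j+1) with hsj
  set sm := suffixEnt r H p m - suffixEnt r H p (m+1) with hsm
  have main : (2:ℝ) ^ si + (2:ℝ) ^ sj ≤ (2:ℝ) ^ sm := by
    calc (2:ℝ) ^ si + (2:ℝ) ^ sj
        ≤ (2:ℝ) ^ sm * E1 + (2:ℝ) ^ sm * E2 := add_le_add step1 step2
      _ = (2:ℝ) ^ sm * (E1 + E2) := by ring
      _ ≤ (2:ℝ) ^ sm * 1 :=
          mul_le_mul_of_nonneg_left step3 (Real.rpow_pos_of_pos h2pos _).le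
      _ = (2:ℝ) ^ sm := mul_one _
  calc (2:ℝ) ^ (si - c) + (2:ℝ) ^ (sj - c) = ((2:ℝ) ^ si + (2:ℝ) ^ sj) / (2:ℝ) ^ c := by
        rw [Real.rpow_sub h2pos si c, Real.rpow_sub h2pos sj c, ← add_div]
    _ ≤ (2:ℝ) ^ sm / (2:ℝ) ^ c := by
        gcongr
    _ = (2:ℝ) ^ (sm - c) := (Real.rpow_sub h2pos _ _).symm
end spec
end

section
/- Let r ≥ 2 and 1 ≤ k ≤ ⌊r/2⌋. If (x_1,…,x_r) ∈ X_{r,k} maximizes ∏_{i=1}^r x_i over X_{r,k}, then x_j + x_{r−j} = 1 for every j ∈ {1,…,k}. -/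
open Finset

/-- **Lemma 3.2 (symmetry of maximisers).** If `(x_1, …, x_r) ∈ X_{r,k}` maximises
`∏_{i=1}^r x_i` over `X_{r,k}`, then `x_j + x_{r-j} = 1` for every `j ∈ {1, …, k}`. -/
theorem maximizer_symmetry (r k : ℕ) (hr : 2 ≤ r) (hk1 : 1 ≤ k) (hk2 : k ≤ r / 2)
    (x : ℕ → ℝ) (hx : memX r k x)
    (hmax : ∀ y : ℕ → ℝ, memX r k y →
      ∏ i ∈ Finset.Icc 1 r, y i ≤ ∏ i ∈ Finset.Icc 1 r, x i) :
    ∀ j, 1 ≤ j → j ≤ k → x j + x (r - j) = 1 := by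
  obtain ⟨hpos1, hmono', hxr, hadd⟩ := hx
  have h2k : 2 * k ≤ r := by omega
  -- full monotonicity
  have hmono : ∀ a b, 1 ≤ a → a ≤ b → b ≤ r → x a ≤ x b := by
    intro a b ha hab
    induction b, hab using Nat.le_induction with
    | base => exact fun _ => le_rfl
    | succ m hm ih =>
      intro hbr
      exact le_trans (ih (by omega)) (hmono' m (by omega) (by omega))
  have hposall : ∀ i, 1 ≤ i → i ≤ r → 0 < x i := fun i hi1 hir =>
    lt_of_lt_of_le hpos1 (hmono 1 i le_rfl hi1 hir)
  -- upper bound x j + x (r-j) ≤ 1 for 1 ≤ j ≤ k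
  have hub : ∀ j, 1 ≤ j → j ≤ k → x j + x (r - j) ≤ 1 := by
    intro j hj1 hjk
    have h := hadd j (r - j) hj1 hjk (by omega) (by omega)
    have he : j + (r - j) = r := by omega
    rw [he, hxr] at h
    exact h
  -- strong induction on j
  intro j
  induction j using Nat.strong_induction_on with
  | _ j IH =>
    intro hj1 hjk
    by_contra hne
    have hlt : x j + x (r - j) < 1 := lt_of_le_of_ne (hub j hj1 hjk) hne
    have hkrj : k ≤ r - j := by omega
    have hrj1 : 1 ≤ r - j := by omega
    have hrjr : r - j < r := by omega
    set c : ℝ := if 2 * j = r then (1 / 2 : ℝ) else 1 - x j with hcdef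
    -- key: c is strictly bigger than x (r-j)
    have hxc : x (r - j) < c := by
      by_cases h2j : 2 * j = r
      · have hrjj : r - j = j := by omega
        rw [hrjj] at hlt ⊢
        simp only [hcdef, if_pos h2j]
        linarith
      · simp only [hcdef, if_neg h2j]
        linarith
    have hc_pos : 0 < c := lt_trans (hposall (r - j) hrj1 (by omega)) hxc
    -- c ≤ 1 - x j
    have hcle : c ≤ 1 - x j := by
      by_cases h2j : 2 * j = r
      · have hrjj : r - j = j := by omega
        rw [hrjj] at hlt
        simp only [hcdef, if_pos h2j]
        linarith
      · simp only [hcdef, if_neg h2j]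
        exact le_rfl
    -- c ≤ x (r - j + 1)
    have hcnext : c ≤ x (r - j + 1) := by
      by_cases hj2 : 2 ≤ j
      · have hIH := IH (j - 1) (by omega) (by omega) (by omega)
        have he : r - (j - 1) = r - j + 1 := by omega
        rw [he] at hIH
        have hxm : x (j - 1) ≤ x j := hmono (j - 1) j (by omega) (by omega) (by omega)
        linarith
      · have hj1' : j = 1 := by omega
        have he : r - j + 1 = r := by omega
        rw [he, hxr]
        have := hposall j hj1 (by omega)
        linarith
    -- F2 : for 1 ≤ i < j, x i + c ≤ x (r - j + i)
    have hF2 : ∀ i, 1 ≤ i → i < j → x i + c ≤ x (r - j + i) := by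
      intro i hi1 hij
      have hIH := IH (j - i) (by omega) (by omega) (by omega)
      have he : r - (j - i) = r - j + i := by omega
      rw [he] at hIH
      -- x i + x (j - i) ≤ x j
      have hsumj : x i + x (j - i) ≤ x j := by
        by_cases hle : i ≤ j - i
        · have h := hadd i (j - i) hi1 (by omega) hle (by omega)
          have he2 : i + (j - i) = j := by omega
          rwa [he2] at h
        · have h := hadd (j - i) i (by omega) (by omega) (by omega) (by omega)
          have he2 : j - i + i = j := by omega
          rw [he2] at h
          linarith
      linarith
    -- the perturbed point
    set y : ℕ → ℝ := fun m => if m = r - j then c else x m with hydef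
    have hyrj : y (r - j) = c := if_pos rfl
    have hyne : ∀ m, m ≠ r - j → y m = x m := fun m hm => if_neg hm
    -- y ∈ X_{r,k}
    have hymem : memX r k y := by
      refine ⟨?_, ?_, ?_, ?_⟩
      · by_cases h1 : 1 = r - j
        · rw [← h1] at hyrj; rw [hyrj]; exact hc_pos
        · rw [hyne 1 h1]; exact hpos1
      · intro i hi1 hir
        by_cases hi : i = r - j
        · rw [hi, hyrj, hyne (r - j + 1) (by omega)]
          exact hcnext
        · rw [hyne i hi]
          by_cases hi' : i + 1 = r - j
          · rw [hi', hyrj]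
            have := hmono' i hi1 hir
            rw [hi'] at this
            linarith
          · rw [hyne (i + 1) hi']
            exact hmono' i hi1 hir
      · rw [hyne r (by omega)]; exact hxr
      · intro i j' hi1 hik hij' hijr
        by_cases hi : i = r - j
        · -- then r = 2j, i = j' = k = j, i + j' = r
          have hfacts : j' = r - j ∧ 2 * j = r ∧ i + j' = r := by omega
          obtain ⟨hj'e, h2j, hije⟩ := hfacts
          have ha : y i = c := by rw [hi]; exact hyrj
          have hb : y j' = c := by rw [hj'e]; exact hyrj
          have hs : y (i + j') = 1 := by rw [hije, hyne r (by omega)]; exact hxr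
          rw [ha, hb, hs]
          simp only [hcdef, if_pos h2j]
          norm_num
        · have ha : y i = x i := hyne i hi
          by_cases hj' : j' = r - j
          · have hijle : i ≤ j := by omega
            have hb : y j' = c := by rw [hj']; exact hyrj
            by_cases hieq : i = j
            · have hs : y (i + j') = 1 := by
                rw [show i + j' = r by omega, hyne r (by omega)]; exact hxr
              rw [ha, hb, hs, hieq]
              linarith
            · have hilt : i < j := by omega
              have hs : y (i + j') = x (r - j + i) := by
                rw [show i + j' = r - j + i by omega]
                exact hyne (r - j + i) (by omega)
              rw [ha, hb, hs]
              exact hF2 i hi1 hilt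
          · have hb : y j' = x j' := hyne j' hj'
            by_cases hsr : i + j' = r - j
            · have hs : y (i + j') = c := by rw [hsr]; exact hyrj
              have h := hadd i j' hi1 hik hij' hijr
              rw [hsr] at h
              rw [ha, hb, hs]
              linarith
            · rw [ha, hb, hyne (i + j') hsr]
              exact hadd i j' hi1 hik hij' hijr
    -- product comparison
    have hrjmem : r - j ∈ Finset.Icc 1 r := Finset.mem_Icc.mpr ⟨hrj1, by omega⟩
    have hP : 0 < ∏ i ∈ (Finset.Icc 1 r).erase (r - j), x i := by
      apply Finset.prod_pos
      intro i hi
      have := Finset.mem_Icc.mp (Finset.mem_of_mem_erase hi)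
      exact hposall i this.1 this.2
    have hprodx : ∏ i ∈ Finset.Icc 1 r, x i
        = x (r - j) * ∏ i ∈ (Finset.Icc 1 r).erase (r - j), x i :=
      (Finset.mul_prod_erase _ _ hrjmem).symm
    have hprody : ∏ i ∈ Finset.Icc 1 r, y i
        = c * ∏ i ∈ (Finset.Icc 1 r).erase (r - j), x i := by
      rw [← Finset.mul_prod_erase _ y hrjmem, hyrj]
      congr 1
      exact Finset.prod_congr rfl fun i hi => hyne i (Finset.mem_erase.mp hi).1
    have hle := hmax y hymem
    rw [hprodx, hprody] at hle
    nlinarith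
end

section
/- Let r ≥ 2, let 1 ≤ k ≤ ⌊r/2⌋, let (x_1,…,x_r) ∈ X_{r,k}, set x_0 = 0, assume x_i + x_{r−i} = 1 for all i ∈ {1,…,k}, and assume the initial segment [0,I] satisfies I ≤ k − 1. Then for all 0 ≤ L ≤ R ≤ r: (i) if R ≤ k − 1, then [L,R] is a segment if and only if [r−R, r−L] is a segment, and if R ≤ k, then [L,R] is a super segment if and only if [r−R, r−L] is a super segment; (ii) if [L,R] is a segment with L ≤ k and R ≥ r − k (i.e. it is both left-crossing and right-crossing), then L = r − R; (iii) if [L,R] is a left-crossing but not right-crossing segment, then r − L is the right endpoint of the segment containing r − k, and if [L,R] is a right-crossing but not left-crossing segment, then r − R is the left endpoint of the segment containing k. -/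
open Finset

/-- Auxiliary: the "gap at `i` is zero" predicate. -/
def Zg (x : ℕ → ℝ) (i : ℕ) : Prop := x (i + 1) = x i + x 1

lemma unif_iff_zg (x : ℕ → ℝ) (L R : ℕ) :
    UniformIntv x L R ↔ ∀ i, L ≤ i → i < R → Zg x i := by
  constructor
  · intro hu i hLi hiR
    have h1 := hu i hLi (le_of_lt hiR)
    have h2 := hu (i + 1) (by omega) (by omega)
    rw [show i + 1 - L = (i - L) + 1 from by omega] at h2
    push_cast at h2
    unfold Zg
    rw [h2, h1]; ring
  · intro hg
    have key : ∀ n, L + n ≤ R → x (L + n) = x L + (n : ℝ) * x 1 := by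
      intro n
      induction n with
      | zero => intro _; simp
      | succ m ih =>
        intro hm
        have h1 := ih (by omega)
        have h2 := hg (L + m) (by omega) (by omega)
        unfold Zg at h2
        rw [show L + (m + 1) = (L + m) + 1 from by omega, h2, h1]
        push_cast; ring
    intro i hLi hiR
    have h := key (i - L) (by omega)
    rwa [show L + (i - L) = i from by omega] at h

lemma seg_iff_zg (r : ℕ) (x : ℕ → ℝ) (L R : ℕ) (hLR : L ≤ R) (hRr : R ≤ r) :
    IsSegment r x L R ↔
      ((∀ i, L ≤ i → i < R → Zg x i) ∧ (L = 0 ∨ ¬ Zg x (L - 1)) ∧ (R = r ∨ ¬ Zg x R)) := by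
  constructor
  · rintro ⟨-, -, hu, hmax⟩
    refine ⟨(unif_iff_zg x L R).mp hu, ?_, ?_⟩
    · by_cases hL0 : L = 0
      · exact Or.inl hL0
      · refine Or.inr fun hz => ?_
        have hu' : UniformIntv x (L - 1) R := by
          rw [unif_iff_zg]
          intro i h1 h2
          rcases Nat.lt_or_ge i L with h | h
          · have e : i = L - 1 := by omega
            rwa [e]
          · exact (unif_iff_zg x L R).mp hu i h h2
        have := hmax (L - 1) R (by omega) le_rfl hRr hu'
        omega
    · by_cases hRr' : R = r
      · exact Or.inl hRr'
      · refine Or.inr fun hz => ?_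
        have hu' : UniformIntv x L (R + 1) := by
          rw [unif_iff_zg]
          intro i h1 h2
          rcases Nat.lt_or_ge i R with h | h
          · exact (unif_iff_zg x L R).mp hu i h1 h
          · have e : i = R := by omega
            rw [e]; exact hz
        have := hmax L (R + 1) le_rfl (by omega) (by omega) hu'
        omega
  · rintro ⟨hg, hL, hR'⟩
    refine ⟨hLR, hRr, (unif_iff_zg x L R).mpr hg, ?_⟩
    intro L' R' hL'L hRR' hR'r hu'
    have hg' := (unif_iff_zg x L' R').mp hu'
    constructor
    · by_contra hne
      have h1 : L' < L := by omega
      have h2 : Zg x (L - 1) := hg' (L - 1) (by omega) (by omega)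
      rcases hL with h | h
      · omega
      · exact h h2
    · by_contra hne
      have h1 : R < R' := by omega
      have h2 : Zg x R := hg' R (by omega) h1
      rcases hR' with h | h
      · omega
      · exact h h2

lemma extend_left (r : ℕ) (x : ℕ → ℝ) (b : ℕ) (hbr : b ≤ r) (hmax : b = r ∨ ¬ Zg x b) :
    ∀ a, a ≤ b → (∀ i, a ≤ i → i < b → Zg x i) →
      ∃ a', a' ≤ a ∧ IsSegment r x a' b := by
  intro a
  induction a with
  | zero =>
    intro hab hg
    exact ⟨0, le_rfl, (seg_iff_zg r x 0 b hab hbr).mpr ⟨hg, Or.inl rfl, hmax⟩⟩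
  | succ a ih =>
    intro hab hg
    by_cases hza : Zg x a
    · obtain ⟨a', h1, h2⟩ := ih (by omega) (fun i h1 h2 => by
        rcases Nat.lt_or_ge i (a + 1) with h | h
        · have e : i = a := by omega
          rwa [e]
        · exact hg i h h2)
      exact ⟨a', by omega, h2⟩
    · exact ⟨a + 1, le_rfl, (seg_iff_zg r x (a + 1) b hab hbr).mpr
        ⟨hg, Or.inr (by simpa using hza), hmax⟩⟩

lemma extend_right (r : ℕ) (x : ℕ → ℝ) (a : ℕ) (hmin : a = 0 ∨ ¬ Zg x (a - 1)) :
    ∀ n b, b + n = r → a ≤ b → (∀ i, a ≤ i → i < b → Zg x i) →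
      ∃ b', b ≤ b' ∧ IsSegment r x a b' := by
  intro n
  induction n with
  | zero =>
    intro b hbr hab hg
    exact ⟨b, le_rfl, (seg_iff_zg r x a b hab (by omega)).mpr ⟨hg, hmin, Or.inl (by omega)⟩⟩
  | succ n ih =>
    intro b hbr hab hg
    by_cases hzb : Zg x b
    · obtain ⟨b', h1, h2⟩ := ih (b + 1) (by omega) (by omega) (fun i h1 h2 => by
        rcases Nat.lt_or_ge i b with h | h
        · exact hg i h1 h
        · have e : i = b := by omega
          rwa [e])
      exact ⟨b', by omega, h2⟩
    · exact ⟨b, le_rfl, (seg_iff_zg r x a b hab (by omega)).mpr ⟨hg, hmin, Or.inr hzb⟩⟩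

/-- **Lemma 3.7 (symmetry of segments).** Let `(x_1, …, x_r) ∈ X_{r,k}` with `x_0 = 0`,
assume `x_i + x_{r-i} = 1` for `1 ≤ i ≤ k`, and let the initial segment `[0, I]` satisfy
`I ≤ k − 1`. (Here a segment `[L, R]` is *super* if `R = L + I`, i.e. it has length
`I + 1`; it is *left-crossing* if it contains `{k, k+1}` and *right-crossing* if it
contains `{r−k−1, r−k}`.) Then:
(i) for `R ≤ k − 1`, `[L, R]` is a segment iff `[r−R, r−L]` is, and for `R ≤ k`,
`[L, R]` is a super segment iff `[r−R, r−L]` is;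
(ii) if a segment `[L, R]` is both left- and right-crossing then `L = r − R`;
(iii) if a segment `[L, R]` is left- but not right-crossing then `r − L` is the right
endpoint of the segment containing `r − k`, and if it is right- but not left-crossing
then `r − R` is the left endpoint of the segment containing `k`. -/
theorem segment_symmetry (r k : ℕ) (hr : 2 ≤ r) (hk1 : 1 ≤ k) (hk2 : k ≤ r / 2)
    (x : ℕ → ℝ) (hx : memX r k x) (h0 : x 0 = 0)
    (hsym : ∀ i, 1 ≤ i → i ≤ k → x i + x (r - i) = 1)
    (I : ℕ) (hI : IsSegment r x 0 I) (hIk : I + 1 ≤ k) :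
    (∀ L R, L ≤ R → R ≤ r →
      ((R + 1 ≤ k → (IsSegment r x L R ↔ IsSegment r x (r - R) (r - L))) ∧
       (R ≤ k →
        ((IsSegment r x L R ∧ R = L + I) ↔
          (IsSegment r x (r - R) (r - L) ∧ r - L = (r - R) + I))))) ∧
    (∀ L R, IsSegment r x L R → L ≤ k → r - k ≤ R → L = r - R) ∧
    (∀ L R, IsSegment r x L R → L ≤ k → k + 1 ≤ R → ¬ (L ≤ r - k - 1 ∧ r - k ≤ R) →
      ∃ L', IsSegment r x L' (r - L) ∧ L' ≤ r - k ∧ r - k ≤ r - L) ∧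
    (∀ L R, IsSegment r x L R → L ≤ r - k - 1 → r - k ≤ R → ¬ (L ≤ k ∧ k + 1 ≤ R) →
      ∃ R', IsSegment r x (r - R) R' ∧ r - R ≤ k ∧ k ≤ R') := by
  obtain ⟨hd, hmono, hxr, hsup⟩ := hx
  have h2k : 2 * k ≤ r := by omega
  have hsym' : ∀ i, i ≤ k → x (r - i) = 1 - x i := by
    intro i hik
    rcases Nat.eq_zero_or_pos i with h | h
    · subst h; simpa [h0] using hxr
    · have := hsym i h hik; linarith
  have grefl : ∀ i, i + 1 ≤ k → (Zg x i ↔ Zg x (r - 1 - i)) := by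
    intro i hik
    have s1 := hsym' i (by omega)
    have s2 := hsym' (i + 1) hik
    unfold Zg
    rw [show r - 1 - i + 1 = r - i from by omega, show r - 1 - i = r - (i + 1) from by omega]
    constructor <;> intro h <;> linarith
  have hstep : ∀ i, i < r → x i + x 1 ≤ x (i + 1) := by
    intro i hir
    rcases Nat.eq_zero_or_pos i with h | h
    · subst h; simp [h0]
    · have := hsup 1 i le_rfl hk1 h (by omega)
      rw [Nat.add_comm] at this
      linarith
  have hIr : I < r := by omega
  have hxI : x I = (I : ℝ) * x 1 := by
    have := hI.2.2.1 I (Nat.zero_le I) le_rfl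
    simpa [h0] using this
  have hgI : ¬ Zg x I := by
    rcases ((seg_iff_zg r x 0 I hI.1 hI.2.1).mp hI).2.2 with h | h
    · omega
    · exact h
  have hxI1 : (I : ℝ) * x 1 + x 1 < x (I + 1) := by
    have h1 := hstep I hIr
    have h2 : x I + x 1 < x (I + 1) := lt_of_le_of_ne h1 (fun h => hgI h.symm)
    linarith
  have claimB : (∀ i, k - I ≤ i → i ≤ k → Zg x i) → False := by
    intro hg
    have hu : ∀ i, k - I ≤ i → i < k + 1 → Zg x i := fun i h1 h2 => hg i h1 (by omega)
    have hk1' := (unif_iff_zg x (k - I) (k + 1)).mpr hu (k + 1) (by omega) le_rfl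
    rw [show k + 1 - (k - I) = I + 1 from by omega] at hk1'
    have hsum : x (k - I) + x (I + 1) ≤ x (k + 1) := by
      rcases le_total (k - I) (I + 1) with h | h
      · have := hsup (k - I) (I + 1) (by omega) (by omega) h (by omega)
        rwa [show k - I + (I + 1) = k + 1 from by omega] at this
      · have := hsup (I + 1) (k - I) (by omega) (by omega) h (by omega)
        rw [show I + 1 + (k - I) = k + 1 from by omega] at this
        linarith
    push_cast at hk1'
    linarith
  have claimF : x k = x (k - I) + (I : ℝ) * x 1 → Zg x (r - k - 1) → k - I ≤ r - k - 1 → False := by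
    intro hxk hzg hle
    have hs := hsup (k - I) (r - k - 1) (by omega) (by omega) hle (by omega)
    rw [show k - I + (r - k - 1) = r - (I + 1) from by omega] at hs
    have e1 := hsym' (I + 1) hIk
    have e2 := hsym' k le_rfl
    unfold Zg at hzg
    rw [show r - k - 1 + 1 = r - k from by omega] at hzg
    linarith
  have superF : ∀ L, IsSegment r x L k → k = L + I → IsSegment r x (r - k) (r - L) := by
    intro L hseg hLI
    have hLk : L ≤ k := hseg.1
    have hkr : k ≤ r := hseg.2.1
    have hLval : L = k - I := by omega
    have hL1 : 1 ≤ L := by omega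
    obtain ⟨hgaps, hleft, hright⟩ := (seg_iff_zg r x L k hLk hkr).mp hseg
    have hnPL : ¬ Zg x (L - 1) := by
      rcases hleft with h | h
      · omega
      · exact h
    have hnPk : ¬ Zg x k := by
      rcases hright with h | h
      · omega
      · exact h
    rw [seg_iff_zg r x (r - k) (r - L) (by omega) (by omega)]
    refine ⟨?_, Or.inr ?_, Or.inr ?_⟩
    · intro j h1 h2
      have hh := (grefl (r - 1 - j) (by omega)).mp (hgaps (r - 1 - j) (by omega) (by omega))
      rwa [show r - 1 - (r - 1 - j) = j from by omega] at hh
    · by_cases hc : k - I ≤ r - k - 1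
      · intro hzg
        have hxk : x k = x (k - I) + (I : ℝ) * x 1 := by
          have h := (unif_iff_zg x L k).mpr hgaps k hLk le_rfl
          rw [hLval, show k - (k - I) = I from by omega] at h
          exact h
        exact claimF hxk hzg hc
      · rw [show r - k - 1 = L - 1 from by omega]
        exact hnPL
    · have hh := grefl (L - 1) (by omega)
      rw [show r - 1 - (L - 1) = r - L from by omega] at hh
      exact fun hz => hnPL (hh.mpr hz)
  have superB : ∀ L, L ≤ k → IsSegment r x (r - k) (r - L) → r - L = (r - k) + I →
      IsSegment r x L k := by
    intro L hLk hseg hLI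
    have hLval : L = k - I := by omega
    have hL1 : 1 ≤ L := by omega
    obtain ⟨hgaps, hleft, hright⟩ :=
      (seg_iff_zg r x (r - k) (r - L) (by omega) (by omega)).mp hseg
    have hnP1 : ¬ Zg x (r - k - 1) := by
      rcases hleft with h | h
      · omega
      · exact h
    have hnP2 : ¬ Zg x (r - L) := by
      rcases hright with h | h
      · omega
      · exact h
    have hint : ∀ i, L ≤ i → i < k → Zg x i := by
      intro i h1 h2
      refine (grefl i (by omega)).mpr ?_
      exact hgaps (r - 1 - i) (by omega) (by omega)
    rw [seg_iff_zg r x L k hLk (by omega)]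
    refine ⟨hint, Or.inr ?_, Or.inr ?_⟩
    · have hh := grefl (L - 1) (by omega)
      rw [show r - 1 - (L - 1) = r - L from by omega] at hh
      exact fun hz => hnP2 (hh.mp hz)
    · intro hzk
      refine claimB (fun i h1 h2 => ?_)
      rcases Nat.lt_or_ge i k with h | h
      · exact hint i (by omega) h
      · have e : i = k := by omega
        rw [e]; exact hzk
  have dir1 : ∀ L R, L ≤ R → R ≤ r → R + 1 ≤ k → IsSegment r x L R →
      IsSegment r x (r - R) (r - L) := by
    intro L R hLR hRr hRk hseg
    obtain ⟨hgaps, hleft, hright⟩ := (seg_iff_zg r x L R hLR hRr).mp hseg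
    have hRltr : R < r := by omega
    have hnPR : ¬ Zg x R := by
      rcases hright with h | h
      · omega
      · exact h
    rw [seg_iff_zg r x (r - R) (r - L) (by omega) (by omega)]
    refine ⟨?_, Or.inr ?_, ?_⟩
    · intro j h1 h2
      have hh := (grefl (r - 1 - j) (by omega)).mp (hgaps (r - 1 - j) (by omega) (by omega))
      rwa [show r - 1 - (r - 1 - j) = j from by omega] at hh
    · have hh := grefl R hRk
      rw [show r - 1 - R = r - R - 1 from by omega] at hh
      exact fun hz => hnPR (hh.mpr hz)
    · rcases Nat.eq_zero_or_pos L with h | h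
      · exact Or.inl (by omega)
      · refine Or.inr ?_
        have hnPL : ¬ Zg x (L - 1) := by
          rcases hleft with h' | h'
          · omega
          · exact h'
        have hh := grefl (L - 1) (by omega)
        rw [show r - 1 - (L - 1) = r - L from by omega] at hh
        exact fun hz => hnPL (hh.mpr hz)
  have dir2 : ∀ L R, L ≤ R → R ≤ r → R + 1 ≤ k → IsSegment r x (r - R) (r - L) →
      IsSegment r x L R := by
    intro L R hLR hRr hRk hseg
    have hRltr : R < r := by omega
    obtain ⟨hgaps, hleft, hright⟩ :=
      (seg_iff_zg r x (r - R) (r - L) (by omega) (by omega)).mp hseg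
    have hnP1 : ¬ Zg x (r - R - 1) := by
      rcases hleft with h | h
      · omega
      · exact h
    rw [seg_iff_zg r x L R hLR hRr]
    refine ⟨?_, ?_, Or.inr ?_⟩
    · intro i h1 h2
      refine (grefl i (by omega)).mpr ?_
      exact hgaps (r - 1 - i) (by omega) (by omega)
    · rcases Nat.eq_zero_or_pos L with h | h
      · exact Or.inl h
      · refine Or.inr ?_
        have hnP2 : ¬ Zg x (r - L) := by
          rcases hright with h' | h'
          · omega
          · exact h'
        have hh := grefl (L - 1) (by omega)
        rw [show r - 1 - (L - 1) = r - L from by omega] at hh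
        exact fun hz => hnP2 (hh.mp hz)
    · have hh := grefl R hRk
      rw [show r - 1 - R = r - R - 1 from by omega] at hh
      exact fun hz => hnP1 (hh.mp hz)
  refine ⟨?_, ?_, ?_, ?_⟩
  · intro L R hLR hRr
    constructor
    · intro hRk
      exact ⟨dir1 L R hLR hRr hRk, dir2 L R hLR hRr hRk⟩
    · intro hRk
      rcases Nat.lt_or_ge R k with hRk' | hRk'
      · constructor
        · rintro ⟨hs, he⟩
          exact ⟨dir1 L R hLR hRr (by omega) hs, by omega⟩
        · rintro ⟨hs, he⟩
          exact ⟨dir2 L R hLR hRr (by omega) hs, by omega⟩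
      · have hRk'' : R = k := by omega
        subst hRk''
        constructor
        · rintro ⟨hs, he⟩
          exact ⟨superF L hs he, by omega⟩
        · rintro ⟨hs, he⟩
          exact ⟨superB L hLR hs he, by omega⟩
  · intro L R hseg hLk hRk
    have hLR := hseg.1
    have hRr := hseg.2.1
    obtain ⟨hgaps, hleft, hright⟩ := (seg_iff_zg r x L R hLR hRr).mp hseg
    by_contra hne
    rcases Nat.lt_or_ge L (r - R) with hc | hc
    · have hRltr : R < r := by omega
      have hnPR : ¬ Zg x R := by
        rcases hright with h | h
        · omega
        · exact h
      apply hnPR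
      have hh := grefl (r - 1 - R) (by omega)
      rw [show r - 1 - (r - 1 - R) = R from by omega] at hh
      exact hh.mp (hgaps (r - 1 - R) (by omega) (by omega))
    · have hc' : r - R < L := by omega
      have hnPL : ¬ Zg x (L - 1) := by
        rcases hleft with h | h
        · omega
        · exact h
      apply hnPL
      have hh := grefl (L - 1) (by omega)
      rw [show r - 1 - (L - 1) = r - L from by omega] at hh
      exact hh.mpr (hgaps (r - L) (by omega) (by omega))
  · intro L R hseg hLk hkR hnot
    have hLR := hseg.1
    have hRr := hseg.2.1
    obtain ⟨hgaps, hleft, hright⟩ := (seg_iff_zg r x L R hLR hRr).mp hseg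
    have hmax : r - L = r ∨ ¬ Zg x (r - L) := by
      rcases Nat.eq_zero_or_pos L with h | h
      · exact Or.inl (by omega)
      · refine Or.inr ?_
        have hnPL : ¬ Zg x (L - 1) := by
          rcases hleft with h' | h'
          · omega
          · exact h'
        have hh := grefl (L - 1) (by omega)
        rw [show r - 1 - (L - 1) = r - L from by omega] at hh
        exact fun hz => hnPL (hh.mpr hz)
    obtain ⟨L', hL', hsegL'⟩ := extend_left r x (r - L) (by omega) hmax (r - k) (by omega)
      (by
        intro j h1 h2
        have hh := (grefl (r - 1 - j) (by omega)).mp (hgaps (r - 1 - j) (by omega) (by omega))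
        rwa [show r - 1 - (r - 1 - j) = j from by omega] at hh)
    exact ⟨L', hsegL', hL', by omega⟩
  · intro L R hseg hLrk hRrk hnot
    have hLR := hseg.1
    have hRr := hseg.2.1
    obtain ⟨hgaps, hleft, hright⟩ := (seg_iff_zg r x L R hLR hRr).mp hseg
    have hmin : r - R = 0 ∨ ¬ Zg x (r - R - 1) := by
      rcases Nat.eq_or_lt_of_le hRr with h | h
      · exact Or.inl (by omega)
      · refine Or.inr ?_
        have hnPR : ¬ Zg x R := by
          rcases hright with h' | h'
          · omega
          · exact h'
        have hh := grefl (r - R - 1) (by omega)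
        rw [show r - 1 - (r - R - 1) = R from by omega] at hh
        exact fun hz => hnPR (hh.mp hz)
    obtain ⟨R', hR', hsegR'⟩ := extend_right r x (r - R) hmin (r - k) k (by omega) (by omega)
      (by
        intro i h1 h2
        refine (grefl i (by omega)).mpr ?_
        exact hgaps (r - 1 - i) (by omega) (by omega))
    exact ⟨R', hsegR', by omega, hR'⟩
end

section
/- Let r ≥ 2 and 1 ≤ k ≤ r − 1, let F be a family of λ-tents such that every Δ_λ ∈ F corresponds to a partition λ of r with r > λ_1 ≥ k, and let L ⊆ {0, 1, …, k−1}. Then every L-intersecting r-uniform hypergraph H satisfies |E(H)| ≤ ex(|V(H)|, F) and b(H) ≤ π(F). -/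
open Finset

section Aux

/-- Convenient bundle of the tent-family hypotheses. -/
def TentHyp (r k : ℕ) (𝓕 : Set NatHypergraph) : Prop :=
  ∀ F ∈ 𝓕, ∃ lam : List ℕ, lam ≠ [] ∧ List.Pairwise (· ≥ ·) lam ∧
      (∀ a ∈ lam, 1 ≤ a) ∧ lam.sum = r ∧ lam.headI < r ∧ k ≤ lam.headI ∧
      IsGeneralTent r lam F

lemma headI_eq_getD (lam : List ℕ) : lam.headI = lam.getD 0 0 := by
  cases lam <;> simp

lemma tent_length_ge_two {r : ℕ} {lam : List ℕ} (hne : lam ≠ [])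
    (hpos : ∀ a ∈ lam, 1 ≤ a) (hsum : lam.sum = r) (hlt : lam.headI < r) :
    2 ≤ lam.length := by
  match lam, hne with
  | [a], _ => simp at hsum hlt; omega
  | a :: b :: l, _ => simp

lemma tent_homfree (r k : ℕ) (𝓕 : Set NatHypergraph) (h𝓕 : TentHyp r k 𝓕)
    (Lset : Set ℕ) (hL : ∀ l ∈ Lset, l + 1 ≤ k)
    (H : NatHypergraph) (hH : H.IsUniform r) (hHL : LIntersecting Lset H) :
    H.HomFree 𝓕 := by
  intro F hF f hf
  obtain ⟨lam, hne, _, hpos, hsum, hlt, hk, e, hverts, hedges, hcard, hecard, hint,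
    hcover, hdisj, v, hapex⟩ := h𝓕 F hF
  have hm1 : 1 ≤ lam.length := by
    cases lam with
    | nil => exact absurd rfl hne
    | cons a l => simp
  have hm2 : 2 ≤ lam.length := tent_length_ge_two hne hpos hsum hlt
  obtain ⟨hfv, hfe⟩ := hf
  have hmem : ∀ i, i ≤ lam.length → e i ∈ F.edges := by
    intro i hi
    rw [hedges]
    exact Finset.mem_image_of_mem e (Finset.mem_range.mpr (by omega))
  have hinj : ∀ i, i ≤ lam.length → Set.InjOn f ↑(e i) := by
    intro i hi
    have h1 : (e i).card = r := hecard i (Finset.mem_range.mpr (by omega))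
    have h2 : ((e i).image f).card = r := hH _ (hfe _ (hmem i hi))
    exact Finset.card_image_iff.mp (by rw [h1, h2])
  by_cases hE : (e 0).image f = (e 1).image f
  · -- collapsed case
    have hv12 : v ∈ e 1 ∩ e 2 := by
      rw [hapex 1 2 le_rfl one_lt_two hm2]; exact Finset.mem_singleton_self v
    have hv0 : v ∉ e 0 := by
      intro hv0
      have hd := hdisj 1 2 le_rfl one_lt_two hm2
      rw [Finset.mem_inter] at hv12
      exact (Finset.disjoint_left.mp hd (Finset.mem_inter.mpr ⟨hv0, hv12.1⟩))
        (Finset.mem_inter.mpr ⟨hv0, hv12.2⟩)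
    have hv1 : v ∈ e 1 := (Finset.mem_inter.mp hv12).1
    have hfv1 : f v ∈ (e 0).image f := by
      rw [hE]; exact Finset.mem_image_of_mem f hv1
    obtain ⟨s, hs, hfs⟩ := Finset.mem_image.mp hfv1
    have hs' := hs
    rw [hcover] at hs'
    obtain ⟨j, hj, hsj⟩ := Finset.mem_biUnion.mp hs'
    rw [Finset.mem_Icc] at hj
    have hvj : v ∈ e j := by
      rcases eq_or_lt_of_le hj.1 with h1 | h1
      · rw [← h1]; exact hv1
      · have h2 := hapex 1 j le_rfl h1 hj.2
        have h3 : v ∈ e 1 ∩ e j := by rw [h2]; exact Finset.mem_singleton_self v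
        exact (Finset.mem_inter.mp h3).2
    have hsv : s ≠ v := fun h => hv0 (h ▸ hs)
    exact hsv (hinj j hj.2 (by exact_mod_cast (Finset.mem_inter.mp hsj).2) hvj hfs)
  · -- two distinct edges intersecting in ≥ k vertices
    have h0 : (e 0).image f ∈ H.edges := hfe _ (hmem 0 (by omega))
    have h1 : (e 1).image f ∈ H.edges := hfe _ (hmem 1 hm1)
    have hcard01 : (e 0 ∩ e 1).card = lam.headI := by
      rw [hint 1 le_rfl hm1, headI_eq_getD]
    have hsub : (e 0 ∩ e 1).image f ⊆ (e 0).image f ∩ (e 1).image f :=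
      Finset.image_inter_subset _ _ _
    have hcardim : ((e 0 ∩ e 1).image f).card = lam.headI := by
      rw [Finset.card_image_of_injOn ((hinj 0 (by omega)).mono (by
        intro x hx; exact_mod_cast Finset.mem_of_mem_inter_left hx)), hcard01]
    have hge : k ≤ ((e 0).image f ∩ (e 1).image f).card := by
      calc k ≤ lam.headI := hk
      _ = ((e 0 ∩ e 1).image f).card := hcardim.symm
      _ ≤ _ := Finset.card_le_card hsub
    have := hL _ (hHL _ h0 _ h1 hE)
    omega

end Aux
section Aux2

lemma homFree_free {𝓕 : Set NatHypergraph} {H : NatHypergraph} (h : H.HomFree 𝓕) : H.Free 𝓕 := by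
  rintro F hF ⟨f, _, h1, h2⟩
  exact h F hF f ⟨h1, h2⟩

/-- The defining set of `exNum`. -/
def exSet (r n : ℕ) (𝓕 : Set NatHypergraph) : Set ℕ :=
  {m : ℕ | ∃ H : NatHypergraph, H.verts = Finset.range n ∧ H.IsUniform r ∧
    H.Free 𝓕 ∧ H.edges.card = m}

lemma exNum_def (r n : ℕ) (𝓕 : Set NatHypergraph) : exNum r n 𝓕 = sSup (exSet r n 𝓕) := rfl

lemma exSet_le (r n : ℕ) (𝓕 : Set NatHypergraph) : ∀ m ∈ exSet r n 𝓕, m ≤ n.choose r := by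
  rintro m ⟨H, hv, hu, _, hc⟩
  have hsub : H.edges ⊆ Finset.powersetCard r (Finset.range n) := by
    intro e he
    exact Finset.mem_powersetCard.mpr ⟨hv ▸ H.edge_sub e he, hu e he⟩
  calc m = H.edges.card := hc.symm
  _ ≤ (Finset.powersetCard r (Finset.range n)).card := Finset.card_le_card hsub
  _ = n.choose r := by rw [Finset.card_powersetCard, Finset.card_range]

lemma exSet_bddAbove (r n : ℕ) (𝓕 : Set NatHypergraph) : BddAbove (exSet r n 𝓕) :=
  ⟨n.choose r, exSet_le r n 𝓕⟩

/-- The empty hypergraph on `range n`. -/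
def emptyHG (n : ℕ) : NatHypergraph :=
  ⟨Finset.range n, ∅, by intro e he; exact absurd he (Finset.notMem_empty e)⟩

lemma exSet_nonempty (r n : ℕ) (𝓕 : Set NatHypergraph) (hFne : ∀ F ∈ 𝓕, F.edges.Nonempty) :
    (exSet r n 𝓕).Nonempty := by
  refine ⟨0, emptyHG n, rfl, ?_, ?_, rfl⟩
  · intro e he; exact absurd he (Finset.notMem_empty e)
  · rintro F hF ⟨f, _, _, h2⟩
    obtain ⟨e, he⟩ := hFne F hF
    exact absurd (h2 e he) (Finset.notMem_empty _)

lemma exNum_mem (r n : ℕ) (𝓕 : Set NatHypergraph) (hFne : ∀ F ∈ 𝓕, F.edges.Nonempty) :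
    exNum r n 𝓕 ∈ exSet r n 𝓕 :=
  Nat.sSup_mem (exSet_nonempty r n 𝓕 hFne) (exSet_bddAbove r n 𝓕)

lemma relabel_exists (r : ℕ) (𝓕 : Set NatHypergraph) (G : NatHypergraph) :
    ∃ G' : NatHypergraph, G'.verts = Finset.range G.verts.card ∧
      (G.IsUniform r → G'.IsUniform r) ∧ (G.Free 𝓕 → G'.Free 𝓕) ∧
      G'.edges.card = G.edges.card := by
  classical
  set n := G.verts.card with hn
  set σ := G.verts.orderIsoOfFin rfl with hσ
  set g : ℕ → ℕ := fun x => if h : x ∈ G.verts then (σ.symm ⟨x, h⟩ : ℕ) else n with hg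
  set gi : ℕ → ℕ := fun i => if h : i < n then (σ ⟨i, h⟩ : ℕ) else 0 with hgi
  have hglt : ∀ x ∈ G.verts, g x < n := by
    intro x hx
    simp only [hg, dif_pos hx]
    exact (σ.symm ⟨x, hx⟩).isLt
  have hgig : ∀ x ∈ G.verts, gi (g x) = x := by
    intro x hx
    simp only [hg, dif_pos hx]
    have h1 : ((σ.symm ⟨x, hx⟩ : Fin n) : ℕ) < n := (σ.symm ⟨x, hx⟩).isLt
    simp only [hgi, dif_pos h1, Fin.eta, OrderIso.apply_symm_apply]
  have hgiv : ∀ i, i < n → gi i ∈ G.verts := by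
    intro i hi
    simp only [hgi, dif_pos hi]
    exact (σ ⟨i, hi⟩).2
  have hggi : ∀ i, i < n → g (gi i) = i := by
    intro i hi
    have h2 := hgiv i hi
    simp only [hgi, dif_pos hi] at h2 ⊢
    simp only [hg, dif_pos h2]
    congr 1
    have : (⟨((σ ⟨i, hi⟩ : G.verts) : ℕ), h2⟩ : G.verts) = σ ⟨i, hi⟩ := rfl
    rw [this, OrderIso.symm_apply_apply]
  have hgInj : Set.InjOn g ↑G.verts := by
    intro x hx y hy hxy
    rw [← hgig x hx, hxy, hgig y hy]
  have himg : ∀ e : Finset ℕ, e ⊆ G.verts → (e.image g).image gi = e := by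
    intro e he
    rw [Finset.image_image]
    rw [show Finset.image (gi ∘ g) e = Finset.image id e from
      Finset.image_congr (fun x hx => hgig x (he hx))]
    exact Finset.image_id
  refine ⟨⟨Finset.range n, G.edges.image (Finset.image g), ?_⟩, rfl, ?_, ?_, ?_⟩
  · intro e' he'
    obtain ⟨e, he, rfl⟩ := Finset.mem_image.mp he'
    intro x hx
    obtain ⟨y, hy, rfl⟩ := Finset.mem_image.mp hx
    exact Finset.mem_range.mpr (hglt y (G.edge_sub e he hy))
  · intro hu e' he'
    obtain ⟨e, he, rfl⟩ := Finset.mem_image.mp he'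
    rw [Finset.card_image_of_injOn (hgInj.mono (by exact_mod_cast G.edge_sub e he))]
    exact hu e he
  · rintro hfree F hF ⟨f, hinj, hv, he⟩
    refine hfree F hF ⟨gi ∘ f, ?_, ?_, ?_⟩
    · intro x hx y hy hxy
      have hfx := Finset.mem_range.mp (hv x hx)
      have hfy := Finset.mem_range.mp (hv y hy)
      exact hinj hx hy (by rw [← hggi _ hfx, ← hggi _ hfy]; exact congrArg g hxy)
    · intro x hx
      exact hgiv _ (Finset.mem_range.mp (hv x hx))
    · intro eF heF
      obtain ⟨e0, he0, heq⟩ := Finset.mem_image.mp (he eF heF)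
      rw [show eF.image (gi ∘ f) = (eF.image f).image gi from (Finset.image_image).symm,
        ← heq, himg e0 (G.edge_sub e0 he0)]
      exact he0
  · apply Finset.card_image_of_injOn
    intro e1 he1 e2 he2 h12
    rw [← himg e1 (G.edge_sub e1 he1), h12, himg e2 (G.edge_sub e2 he2)]

lemma card_le_exNum (r n : ℕ) (𝓕 : Set NatHypergraph) (hFne : ∀ F ∈ 𝓕, F.edges.Nonempty)
    (G : NatHypergraph) (hu : G.IsUniform r) (hfree : G.Free 𝓕) (hn : G.verts.card = n) :
    G.edges.card ≤ exNum r n 𝓕 := by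
  obtain ⟨G', hv', hu', hf', hc'⟩ := relabel_exists r 𝓕 G
  rw [← hc']
  exact le_csSup (exSet_bddAbove r n 𝓕) ⟨G', hn ▸ hv', hu' hu, hf' hfree, rfl⟩

end Aux2
section Aux3

open Filter Topology

lemma sum_card_filter_comm (s : Finset ℕ) (t : Finset (Finset ℕ)) :
    ∑ v ∈ s, (t.filter (fun e => v ∉ e)).card = ∑ e ∈ t, (s.filter (fun v => v ∉ e)).card := by
  simp_rw [Finset.card_filter]
  exact Finset.sum_comm

lemma exNum_succ_mul_le (r n : ℕ) (𝓕 : Set NatHypergraph)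
    (hFne : ∀ F ∈ 𝓕, F.edges.Nonempty) (hrn : r ≤ n) :
    (n + 1 - r) * exNum r (n + 1) 𝓕 ≤ (n + 1) * exNum r n 𝓕 := by
  classical
  obtain ⟨G, hv, hu, hfree, hc⟩ := exNum_mem r (n + 1) 𝓕 hFne
  have key : ∀ v ∈ Finset.range (n + 1), (G.edges.filter (fun e => v ∉ e)).card ≤ exNum r n 𝓕 := by
    intro v hv'
    refine card_le_exNum r n 𝓕 hFne
      ⟨G.verts.erase v, G.edges.filter (fun e => v ∉ e), ?_⟩ ?_ ?_ ?_
    · intro e he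
      rw [Finset.mem_filter] at he
      exact Finset.subset_erase.mpr ⟨G.edge_sub e he.1, he.2⟩
    · intro e he
      exact hu e (Finset.mem_filter.mp he).1
    · rintro F hF ⟨f, hinj, hfv, hfe⟩
      refine hfree F hF ⟨f, hinj, ?_, ?_⟩
      · intro x hx
        exact Finset.mem_of_mem_erase (hfv x hx)
      · intro e he
        exact (Finset.mem_filter.mp (hfe e he)).1
    · show (G.verts.erase v).card = n
      rw [hv, Finset.card_erase_of_mem hv', Finset.card_range]
      omega
  have count : ∀ e ∈ G.edges, ((Finset.range (n + 1)).filter (fun v => v ∉ e)).card = n + 1 - r := by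
    intro e he
    have hsub : e ⊆ Finset.range (n + 1) := hv ▸ G.edge_sub e he
    rw [Finset.filter_not, Finset.filter_mem_eq_inter,
      Finset.inter_eq_right.mpr hsub, Finset.card_sdiff_of_subset hsub, Finset.card_range, hu e he]
  calc (n + 1 - r) * exNum r (n + 1) 𝓕 = ∑ _e ∈ G.edges, (n + 1 - r) := by
        rw [Finset.sum_const, hc, smul_eq_mul, mul_comm]
    _ = ∑ e ∈ G.edges, ((Finset.range (n + 1)).filter (fun v => v ∉ e)).card :=
        (Finset.sum_congr rfl count).symm
    _ = ∑ v ∈ Finset.range (n + 1), (G.edges.filter (fun e => v ∉ e)).card :=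
        (sum_card_filter_comm _ _).symm
    _ ≤ ∑ _v ∈ Finset.range (n + 1), exNum r n 𝓕 := Finset.sum_le_sum key
    _ = (n + 1) * exNum r n 𝓕 := by rw [Finset.sum_const, Finset.card_range, smul_eq_mul]

lemma choose_identity (r n : ℕ) (h : r ≤ n) :
    (n + 1 - r) * (n + 1).choose r = (n + 1) * n.choose r := by
  have h1 := Nat.choose_mul_factorial_mul_factorial (h.trans (Nat.le_succ n))
  have h2 := Nat.choose_mul_factorial_mul_factorial h
  have hfac : (n + 1 - r) * (n - r).factorial = (n + 1 - r).factorial := by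
    have he : n + 1 - r = (n - r) + 1 := by omega
    rw [he, Nat.factorial_succ]
  apply Nat.eq_of_mul_eq_mul_right (Nat.mul_pos r.factorial_pos (n - r).factorial_pos)
  calc (n + 1 - r) * (n + 1).choose r * (r.factorial * (n - r).factorial)
      = (n + 1).choose r * r.factorial * ((n + 1 - r) * (n - r).factorial) := by ring
    _ = (n + 1).choose r * r.factorial * (n + 1 - r).factorial := by rw [hfac]
    _ = (n + 1).factorial := h1
    _ = (n + 1) * n.factorial := Nat.factorial_succ n
    _ = (n + 1) * (n.choose r * r.factorial * (n - r).factorial) := by rw [h2]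
    _ = (n + 1) * n.choose r * (r.factorial * (n - r).factorial) := by ring

lemma exRatio_succ_le (r n : ℕ) (𝓕 : Set NatHypergraph)
    (hFne : ∀ F ∈ 𝓕, F.edges.Nonempty) (hrn : r ≤ n) :
    (exNum r (n + 1) 𝓕 : ℝ) / ((n + 1).choose r : ℝ) ≤ (exNum r n 𝓕 : ℝ) / (n.choose r : ℝ) := by
  have hC0 : (0 : ℝ) < (n.choose r : ℝ) := by exact_mod_cast Nat.choose_pos hrn
  have hC1 : (0 : ℝ) < ((n + 1).choose r : ℝ) := by exact_mod_cast Nat.choose_pos (hrn.trans (Nat.le_succ n))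
  have hd : (0 : ℝ) < ((n + 1 - r : ℕ) : ℝ) := by
    have : 1 ≤ n + 1 - r := by omega
    exact_mod_cast this
  have hineq : ((n + 1 - r : ℕ) : ℝ) * (exNum r (n + 1) 𝓕 : ℝ)
      ≤ ((n + 1 : ℕ) : ℝ) * (exNum r n 𝓕 : ℝ) := by
    exact_mod_cast exNum_succ_mul_le r n 𝓕 hFne hrn
  have hid : ((n + 1 - r : ℕ) : ℝ) * ((n + 1).choose r : ℝ)
      = ((n + 1 : ℕ) : ℝ) * (n.choose r : ℝ) := by
    exact_mod_cast choose_identity r n hrn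
  rw [div_le_div_iff₀ hC1 hC0]
  have hn1 : (0 : ℝ) < ((n + 1 : ℕ) : ℝ) := by positivity
  have := mul_le_mul_of_nonneg_right hineq (le_of_lt hC0)
  nlinarith [hineq, hid, hd, hC0, hC1]

lemma turanDensity_spec (r : ℕ) (𝓕 : Set NatHypergraph)
    (hFne : ∀ F ∈ 𝓕, F.edges.Nonempty) :
    ∃ A : ℝ, Filter.Tendsto (fun n : ℕ => (exNum r n 𝓕 : ℝ) / (n.choose r : ℝ))
      Filter.atTop (𝓝 A) ∧ turanDensity r 𝓕 = A ∧ 0 ≤ A := by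
  set a : ℕ → ℝ := fun n => (exNum r n 𝓕 : ℝ) / (n.choose r : ℝ) with ha
  have hb_anti : Antitone (fun n : ℕ => a (n + r)) := by
    apply antitone_nat_of_succ_le
    intro n
    have h := exRatio_succ_le r (n + r) 𝓕 hFne (Nat.le_add_left r n)
    simpa [show n + 1 + r = n + r + 1 by omega] using h
  have hb_bdd : BddBelow (Set.range fun n : ℕ => a (n + r)) := by
    refine ⟨0, ?_⟩
    rintro x ⟨n, rfl⟩
    positivity
  have hbt : Filter.Tendsto (fun n : ℕ => a (n + r)) Filter.atTop
      (𝓝 (⨅ n : ℕ, a (n + r))) := tendsto_atTop_ciInf hb_anti hb_bdd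
  have hat : Filter.Tendsto a Filter.atTop (𝓝 (⨅ n : ℕ, a (n + r))) :=
    (Filter.tendsto_add_atTop_iff_nat r).mp hbt
  refine ⟨⨅ n : ℕ, a (n + r), hat, ?_, ?_⟩
  · exact lim_eq hat
  · refine ge_of_tendsto' hbt ?_
    intro n
    positivity

end Aux3
section Aux4

lemma blowup_count_le_exNum (r : ℕ) (𝓕 : Set NatHypergraph)
    (hFne : ∀ F ∈ 𝓕, F.edges.Nonempty)
    (hcov : ∀ F ∈ 𝓕, ∀ x ∈ F.verts, ∃ e ∈ F.edges, x ∈ e)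
    (H : NatHypergraph) (hhom : H.HomFree 𝓕) (hH : H.IsUniform r)
    (nv : ℕ → ℕ) (n : ℕ) (htot : ∑ v ∈ H.verts, nv v ≤ n) :
    ∑ e0 ∈ H.edges, ∏ v ∈ e0, nv v ≤ exNum r n 𝓕 := by
  classical
  set a : ℕ → ℕ := fun v => ∑ u ∈ H.verts.filter (· < v), nv u with ha
  set B : ℕ → Finset ℕ := fun v => Finset.Ico (a v) (a v + nv v) with hB
  have hBcard : ∀ v, (B v).card = nv v := by
    intro v; rw [hB]; simp [Nat.card_Ico]
  have hmono : ∀ u v, u ∈ H.verts → u < v → a u + nv u ≤ a v := by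
    intro u v hu huv
    have hins : insert u (H.verts.filter (· < u)) ⊆ H.verts.filter (· < v) := by
      intro x hx
      rcases Finset.mem_insert.mp hx with rfl | hx
      · exact Finset.mem_filter.mpr ⟨hu, huv⟩
      · rw [Finset.mem_filter] at hx ⊢
        exact ⟨hx.1, hx.2.trans huv⟩
    calc a u + nv u = ∑ x ∈ insert u (H.verts.filter (· < u)), nv x := by
          rw [Finset.sum_insert (by simp), add_comm]
      _ ≤ a v := Finset.sum_le_sum_of_subset hins
  have hdisjB : ∀ u ∈ H.verts, ∀ v ∈ H.verts, u ≠ v → Disjoint (B u) (B v) := by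
    have aux : ∀ u v, u ∈ H.verts → u < v → Disjoint (B u) (B v) := by
      intro u v hu huv
      rw [Finset.disjoint_left]
      intro x hx hx'
      rw [hB, Finset.mem_Ico] at hx hx'
      have := hmono u v hu huv
      omega
    intro u hu v hv huv
    rcases lt_or_gt_of_ne huv with h | h
    · exact aux u v hu h
    · exact (aux v u hv h).symm
  have hBsub : ∀ v ∈ H.verts, B v ⊆ Finset.range n := by
    intro v hv x hx
    rw [hB, Finset.mem_Ico] at hx
    have h1 : a v + nv v ≤ ∑ u ∈ H.verts, nv u := by
      have hins : insert v (H.verts.filter (· < v)) ⊆ H.verts := by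
        intro y hy
        rcases Finset.mem_insert.mp hy with rfl | hy
        · exact hv
        · exact (Finset.mem_filter.mp hy).1
      calc a v + nv v = ∑ x ∈ insert v (H.verts.filter (· < v)), nv x := by
            rw [Finset.sum_insert (by simp), add_comm]
        _ ≤ ∑ u ∈ H.verts, nv u := Finset.sum_le_sum_of_subset hins
    rw [Finset.mem_range]
    omega
  set tv : Finset ℕ → Finset (Finset ℕ) :=
    fun e0 => (e0.pi (fun v => B v)).image (fun p => e0.attach.image (fun x => p x.1 x.2))
    with htv
  -- spec of transversals
  have hspec : ∀ e0 ∈ H.edges, ∀ S ∈ tv e0,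
      (∀ v (hv : v ∈ e0), ∃ z, S ∩ B v = {z}) ∧ (∀ z ∈ S, ∃ u ∈ e0, z ∈ B u) ∧
        S.card = e0.card := by
    intro e0 he0 S hS
    have he0sub : e0 ⊆ H.verts := H.edge_sub e0 he0
    obtain ⟨p, hp, rfl⟩ := Finset.mem_image.mp hS
    rw [Finset.mem_pi] at hp
    have hinj : Set.InjOn (fun x : {x // x ∈ e0} => p x.1 x.2) ↑e0.attach := by
      intro x hx y hy hxy
      by_contra hne
      have hne' : x.1 ≠ y.1 := fun h => hne (Subtype.ext h)
      have hd := hdisjB x.1 (he0sub x.2) y.1 (he0sub y.2) hne'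
      have hxy' : p x.1 x.2 = p y.1 y.2 := hxy
      exact (Finset.disjoint_left.mp hd (hp x.1 x.2)) (by rw [hxy']; exact hp y.1 y.2)
    have hmem : ∀ z, z ∈ e0.attach.image (fun x => p x.1 x.2) ↔
        ∃ x : {x // x ∈ e0}, p x.1 x.2 = z := by
      intro z
      simp [Finset.mem_image]
    refine ⟨?_, ?_, ?_⟩
    · intro v hv
      refine ⟨p v hv, ?_⟩
      ext z
      rw [Finset.mem_inter, hmem]
      constructor
      · rintro ⟨⟨x, rfl⟩, hzB⟩
        rw [Finset.mem_singleton]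
        by_cases hxv : x.1 = v
        · cases x with
          | mk x1 hx1 => cases hxv; rfl
        · have hd := hdisjB x.1 (he0sub x.2) v (he0sub hv) hxv
          exact absurd hzB (Finset.disjoint_left.mp hd (hp x.1 x.2))
      · rintro hz
        rw [Finset.mem_singleton] at hz
        subst hz
        exact ⟨⟨⟨v, hv⟩, rfl⟩, hp v hv⟩
    · intro z hz
      obtain ⟨x, rfl⟩ := (hmem z).mp hz
      exact ⟨x.1, x.2, hp x.1 x.2⟩
    · rw [Finset.card_image_of_injOn hinj, Finset.card_attach]
  have htvDisj : ∀ e0 ∈ H.edges, ∀ e1 ∈ H.edges, e0 ≠ e1 → Disjoint (tv e0) (tv e1) := by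
    intro e0 he0 e1 he1 hne
    rw [Finset.disjoint_left]
    intro S hS0 hS1
    obtain ⟨h01, _, _⟩ := hspec e0 he0 S hS0
    obtain ⟨_, h1z, _⟩ := hspec e1 he1 S hS1
    apply hne
    apply Finset.eq_of_subset_of_card_le
    · intro v hv
      obtain ⟨z, hz⟩ := h01 v hv
      have hzS : z ∈ S ∩ B v := hz ▸ Finset.mem_singleton_self z
      rw [Finset.mem_inter] at hzS
      obtain ⟨u, hu, hzu⟩ := h1z z hzS.1
      have : u = v := by
        by_contra h
        have hd := hdisjB u (H.edge_sub e1 he1 hu) v (H.edge_sub e0 he0 hv) h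
        exact (Finset.disjoint_left.mp hd hzu) hzS.2
      exact this ▸ hu
    · rw [hH e0 he0, hH e1 he1]
  -- the blow-up hypergraph
  have hGsub : ∀ S ∈ H.edges.biUnion tv, S ⊆ Finset.range n := by
    intro S hS
    obtain ⟨e0, he0, hStv⟩ := Finset.mem_biUnion.mp hS
    obtain ⟨_, h1z, _⟩ := hspec e0 he0 S hStv
    intro z hz
    obtain ⟨u, hu, hzu⟩ := h1z z hz
    exact hBsub u (H.edge_sub e0 he0 hu) hzu
  set G : NatHypergraph := ⟨Finset.range n, H.edges.biUnion tv, hGsub⟩ with hG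
  have hGuni : G.IsUniform r := by
    intro S hS
    obtain ⟨e0, he0, hStv⟩ := Finset.mem_biUnion.mp hS
    obtain ⟨_, _, hc⟩ := hspec e0 he0 S hStv
    rw [hc]
    exact hH e0 he0
  -- projection
  set π : ℕ → ℕ := fun x => if h : ∃ u, u ∈ H.verts ∧ x ∈ B u then h.choose else 0 with hπ
  have hπ1 : ∀ u ∈ H.verts, ∀ x ∈ B u, π x = u ∧ π x ∈ H.verts := by
    intro u hu x hx
    have h : ∃ u', u' ∈ H.verts ∧ x ∈ B u' := ⟨u, hu, hx⟩
    have h1 : π x = h.choose := by rw [hπ]; exact dif_pos h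
    obtain ⟨hc1, hc2⟩ := h.choose_spec
    have : h.choose = u := by
      by_contra hne
      exact (Finset.disjoint_left.mp (hdisjB _ hc1 u hu hne) hc2) hx
    rw [h1, this]
    exact ⟨rfl, hu⟩
  have hGfree : G.Free 𝓕 := by
    rintro F hF ⟨f, hinj, hfv, hfe⟩
    refine hhom F hF (π ∘ f) ⟨?_, ?_⟩
    · intro x hx
      obtain ⟨e, he, hxe⟩ := hcov F hF x hx
      have hS := hfe e he
      obtain ⟨e0, he0, hStv⟩ := Finset.mem_biUnion.mp hS
      obtain ⟨_, h1z, _⟩ := hspec e0 he0 _ hStv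
      obtain ⟨u, hu, hzu⟩ := h1z (f x) (Finset.mem_image_of_mem f hxe)
      exact (hπ1 u (H.edge_sub e0 he0 hu) (f x) hzu).2
    · intro e he
      have hS := hfe e he
      obtain ⟨e0, he0, hStv⟩ := Finset.mem_biUnion.mp hS
      obtain ⟨h01, h1z, _⟩ := hspec e0 he0 _ hStv
      have : e.image (π ∘ f) = e0 := by
        rw [← Finset.image_image]
        apply Finset.Subset.antisymm
        · intro w hw
          obtain ⟨z, hz, rfl⟩ := Finset.mem_image.mp hw
          obtain ⟨u, hu, hzu⟩ := h1z z hz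
          rw [(hπ1 u (H.edge_sub e0 he0 hu) z hzu).1]
          exact hu
        · intro v hv
          obtain ⟨z, hz⟩ := h01 v hv
          have hzS : z ∈ e.image f ∩ B v := hz ▸ Finset.mem_singleton_self z
          rw [Finset.mem_inter] at hzS
          have := (hπ1 v (H.edge_sub e0 he0 hv) z hzS.2).1
          exact Finset.mem_image.mpr ⟨z, hzS.1, this⟩
      rw [this]
      exact he0
  -- counting
  have hcount : G.edges.card = ∑ e0 ∈ H.edges, ∏ v ∈ e0, nv v := by
    rw [hG]
    show (H.edges.biUnion tv).card = _
    rw [Finset.card_biUnion htvDisj]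
    apply Finset.sum_congr rfl
    intro e0 he0
    have hinjpi : Set.InjOn (fun p : (∀ a, a ∈ e0 → ℕ) => e0.attach.image (fun x => p x.1 x.2))
        ↑(e0.pi (fun v => B v)) := by
      intro p hp q hq hpq
      have hp' : p ∈ e0.pi (fun v => B v) := hp
      have hq' : q ∈ e0.pi (fun v => B v) := hq
      have hq1 := (hspec e0 he0 _ (Finset.mem_image_of_mem _ hq')).1
      funext v hv
      rw [Finset.mem_pi] at hp' hq'
      obtain ⟨z, hz⟩ := hq1 v hv
      have hz' : e0.attach.image (fun x => q x.1 x.2) ∩ B v = {z} := hz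
      have hpq' : e0.attach.image (fun x => p x.1 x.2)
          = e0.attach.image (fun x => q x.1 x.2) := hpq
      have hpz : p v hv ∈ e0.attach.image (fun x => q x.1 x.2) ∩ B v := by
        rw [← hpq']
        exact Finset.mem_inter.mpr
          ⟨Finset.mem_image.mpr ⟨⟨v, hv⟩, Finset.mem_attach _ _, rfl⟩, hp' v hv⟩
      have hqz : q v hv ∈ e0.attach.image (fun x => q x.1 x.2) ∩ B v :=
        Finset.mem_inter.mpr
          ⟨Finset.mem_image.mpr ⟨⟨v, hv⟩, Finset.mem_attach _ _, rfl⟩, hq' v hv⟩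
      rw [hz', Finset.mem_singleton] at hpz hqz
      rw [hpz, hqz]
    show ((e0.pi (fun v => B v)).image (fun p => e0.attach.image (fun x => p x.1 x.2))).card = _
    rw [Finset.card_image_of_injOn hinjpi, Finset.card_pi]
    exact Finset.prod_congr rfl (fun v _ => hBcard v)
  rw [← hcount]
  exact card_le_exNum r n 𝓕 hFne G hGuni hGfree (by rw [hG]; exact Finset.card_range n)
end Aux4
section Aux5

open Filter Topology

lemma floor_div_tendsto (w : ℝ) (hw : 0 ≤ w) :
    Filter.Tendsto (fun n : ℕ => (⌊(n : ℝ) * w⌋₊ : ℝ) / (n : ℝ)) Filter.atTop (𝓝 w) := by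
  apply tendsto_of_tendsto_of_tendsto_of_le_of_le'
    (g := fun n : ℕ => w - 1 / (n : ℝ)) (h := fun _ : ℕ => w)
  · have : Filter.Tendsto (fun n : ℕ => w - 1 / (n : ℝ)) Filter.atTop (𝓝 (w - 0)) :=
      tendsto_const_nhds.sub tendsto_one_div_atTop_nhds_zero_nat
    simpa using this
  · exact tendsto_const_nhds
  · filter_upwards [Filter.eventually_ge_atTop 1] with n hn
    have hn0 : (0 : ℝ) < (n : ℝ) := by exact_mod_cast hn
    rw [sub_div' hn0.ne', div_le_div_iff₀ hn0 hn0]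
    have := Nat.sub_one_lt_floor ((n : ℝ) * w)
    nlinarith [this, hn0]
  · filter_upwards [Filter.eventually_ge_atTop 1] with n hn
    have hn0 : (0 : ℝ) < (n : ℝ) := by exact_mod_cast hn
    rw [div_le_iff₀ hn0]
    have := Nat.floor_le (by positivity : (0:ℝ) ≤ (n : ℝ) * w)
    nlinarith [this, hn0]

lemma ratio_tendsto_one (i : ℕ) :
    Filter.Tendsto (fun n : ℕ => (n : ℝ) / ((n : ℝ) - (i : ℝ))) Filter.atTop (𝓝 1) := by
  have hden : Filter.Tendsto (fun n : ℕ => (n : ℝ) - (i : ℝ)) Filter.atTop Filter.atTop :=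
    Filter.tendsto_atTop_add_const_right _ _ tendsto_natCast_atTop_atTop
  have h0 : Filter.Tendsto (fun n : ℕ => (i : ℝ) / ((n : ℝ) - (i : ℝ))) Filter.atTop (𝓝 0) :=
    tendsto_const_nhds.div_atTop hden
  have h1 : Filter.Tendsto (fun n : ℕ => 1 + (i : ℝ) / ((n : ℝ) - (i : ℝ)))
      Filter.atTop (𝓝 (1 + 0)) := tendsto_const_nhds.add h0
  rw [add_zero] at h1
  apply h1.congr'
  filter_upwards [Filter.eventually_gt_atTop i] with n hn
  have hni : (0 : ℝ) < (n : ℝ) - (i : ℝ) := by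
    have : (i : ℝ) < (n : ℝ) := by exact_mod_cast hn
    linarith
  field_simp
  ring

lemma pow_div_choose_tendsto (r : ℕ) :
    Filter.Tendsto (fun n : ℕ => ((n : ℝ) ^ r) / ((n.choose r : ℕ) : ℝ)) Filter.atTop
      (𝓝 (r.factorial : ℝ)) := by
  have key : ∀ n : ℕ, r ≤ n → ((n : ℝ) ^ r) / ((n.choose r : ℕ) : ℝ)
      = (r.factorial : ℝ) * ∏ i ∈ Finset.range r, (n : ℝ) / ((n : ℝ) - (i : ℝ)) := by
    intro n hn
    have hd : ((n.descFactorial r : ℕ) : ℝ) = ∏ i ∈ Finset.range r, ((n : ℝ) - (i : ℝ)) := by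
      rw [Nat.descFactorial_eq_prod_range]
      push_cast [Finset.prod_natCast]
      apply Finset.prod_congr rfl
      intro i hi
      have : i ≤ n := le_trans (Nat.le_of_lt_succ (Nat.lt_succ_of_lt (Finset.mem_range.mp hi))) hn
      push_cast [Nat.cast_sub this]
      ring
    have hdpos : ∀ i ∈ Finset.range r, (0:ℝ) < (n : ℝ) - (i : ℝ) := by
      intro i hi
      have h1 : i < r := Finset.mem_range.mp hi
      have : (i : ℝ) < (n : ℝ) := by exact_mod_cast lt_of_lt_of_le h1 hn
      linarith
    have hC : ((n.choose r : ℕ) : ℝ) * (r.factorial : ℝ)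
        = ∏ i ∈ Finset.range r, ((n : ℝ) - (i : ℝ)) := by
      rw [← hd]
      exact_mod_cast (by rw [Nat.descFactorial_eq_factorial_mul_choose]; ring :
        n.choose r * r.factorial = n.descFactorial r)
    have hCpos : (0:ℝ) < ((n.choose r : ℕ) : ℝ) := by exact_mod_cast Nat.choose_pos hn
    have hprodpos : (0:ℝ) < ∏ i ∈ Finset.range r, ((n : ℝ) - (i : ℝ)) :=
      Finset.prod_pos hdpos
    rw [Finset.prod_div_distrib, Finset.prod_const, Finset.card_range]
    field_simp
    linear_combination (-(n:ℝ)^r) * hC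
  have hprod : Filter.Tendsto (fun n : ℕ => ∏ i ∈ Finset.range r, (n : ℝ) / ((n : ℝ) - (i : ℝ)))
      Filter.atTop (𝓝 (∏ _i ∈ Finset.range r, (1:ℝ))) :=
    tendsto_finset_prod _ (fun i _ => ratio_tendsto_one i)
  rw [Finset.prod_const_one] at hprod
  have hmul : Filter.Tendsto (fun n : ℕ => (r.factorial : ℝ) *
      ∏ i ∈ Finset.range r, (n : ℝ) / ((n : ℝ) - (i : ℝ))) Filter.atTop
      (𝓝 ((r.factorial : ℝ) * 1)) := tendsto_const_nhds.mul hprod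
  rw [mul_one] at hmul
  apply hmul.congr'
  filter_upwards [Filter.eventually_ge_atTop r] with n hn
  exact (key n hn).symm

end Aux5
/-- **Lemma 6.2 (L-intersecting hypergraphs and tents).** Let `r ≥ 2`, `1 ≤ k ≤ r − 1`,
let `𝓕` be a family of `λ`-tents such that every member corresponds to a partition `λ`
of `r` with `r > λ_1 ≥ k`, and let `Lset ⊆ {0, 1, …, k−1}`. Then every `Lset`-intersecting
`r`-uniform hypergraph `H` satisfies `|E(H)| ≤ ex(|V(H)|, 𝓕)` and `b(H) ≤ π(𝓕)`. -/
theorem LIntersecting_le_turan (r k : ℕ) (hr : 2 ≤ r) (hk1 : 1 ≤ k) (hk2 : k ≤ r - 1)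
    (𝓕 : Set NatHypergraph)
    (h𝓕 : ∀ F ∈ 𝓕, ∃ lam : List ℕ, lam ≠ [] ∧ List.Pairwise (· ≥ ·) lam ∧
      (∀ a ∈ lam, 1 ≤ a) ∧ lam.sum = r ∧ lam.headI < r ∧ k ≤ lam.headI ∧
      IsGeneralTent r lam F)
    (Lset : Set ℕ) (hL : ∀ l ∈ Lset, l + 1 ≤ k)
    (H : NatHypergraph) (hH : H.IsUniform r) (hHL : LIntersecting Lset H) :
    H.edges.card ≤ exNum r H.verts.card 𝓕 ∧ blowupDensity r H ≤ turanDensity r 𝓕 := by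

  classical
  have hTH : TentHyp r k 𝓕 := h𝓕
  have hFne : ∀ F ∈ 𝓕, F.edges.Nonempty := by
    intro F hF
    obtain ⟨lam, hne, _, _, _, _, _, e, hverts, hedges, hcard, _⟩ := h𝓕 F hF
    rw [hedges]
    exact ⟨e 0, Finset.mem_image_of_mem e (Finset.mem_range.mpr (Nat.succ_pos _))⟩
  have hcov : ∀ F ∈ 𝓕, ∀ x ∈ F.verts, ∃ e ∈ F.edges, x ∈ e := by
    intro F hF x hx
    obtain ⟨lam, _, _, _, _, _, _, e, hverts, hedges, _⟩ := h𝓕 F hF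
    rw [hverts] at hx
    obtain ⟨i, hi, hxi⟩ := Finset.mem_biUnion.mp hx
    exact ⟨e i, hedges ▸ Finset.mem_image_of_mem e hi, hxi⟩
  have hhom : H.HomFree 𝓕 := tent_homfree r k 𝓕 hTH Lset hL H hH hHL
  refine ⟨card_le_exNum r _ 𝓕 hFne H hH (homFree_free hhom) rfl, ?_⟩
  obtain ⟨A, hA, hAd, hA0⟩ := turanDensity_spec r 𝓕 hFne
  rw [hAd]
  show (r.factorial : ℝ) * lagrangian H ≤ A
  have hlag : lagrangian H = sSup {s : ℝ | ∃ w : ℕ → ℝ, (∀ v, 0 ≤ w v) ∧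
      (∑ v ∈ H.verts, w v) = 1 ∧ s = ∑ e ∈ H.edges, ∏ v ∈ e, w v} := rfl
  set S : Set ℝ := {s : ℝ | ∃ w : ℕ → ℝ, (∀ v, 0 ≤ w v) ∧
      (∑ v ∈ H.verts, w v) = 1 ∧ s = ∑ e ∈ H.edges, ∏ v ∈ e, w v} with hSdef
  rw [hlag]
  have hub : ∀ s ∈ S, s ≤ A / (r.factorial : ℝ) := by
    rintro s ⟨w, hw0, hw1, rfl⟩
    rw [le_div_iff₀ (by exact_mod_cast r.factorial_pos : (0:ℝ) < (r.factorial : ℝ))]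
    have htot : ∀ n : ℕ, ∑ v ∈ H.verts, ⌊(n : ℝ) * w v⌋₊ ≤ n := by
      intro n
      have h1 : ((∑ v ∈ H.verts, ⌊(n : ℝ) * w v⌋₊ : ℕ) : ℝ) ≤ (n : ℝ) := by
        push_cast
        calc ∑ v ∈ H.verts, (⌊(n : ℝ) * w v⌋₊ : ℝ) ≤ ∑ v ∈ H.verts, (n : ℝ) * w v :=
              Finset.sum_le_sum (fun v _ => Nat.floor_le (mul_nonneg (Nat.cast_nonneg n) (hw0 v)))
          _ = (n : ℝ) := by rw [← Finset.mul_sum, hw1, mul_one]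
      exact_mod_cast h1
    set c : ℕ → ℝ := fun n =>
      ((∑ e0 ∈ H.edges, ∏ v ∈ e0, ⌊(n : ℝ) * w v⌋₊ : ℕ) : ℝ) / ((n.choose r : ℕ) : ℝ)
      with hc
    have hcle : ∀ n, n ≥ r → c n ≤ (exNum r n 𝓕 : ℝ) / ((n.choose r : ℕ) : ℝ) := by
      intro n hn
      show ((∑ e0 ∈ H.edges, ∏ v ∈ e0, ⌊(n : ℝ) * w v⌋₊ : ℕ) : ℝ) / ((n.choose r : ℕ) : ℝ)
        ≤ (exNum r n 𝓕 : ℝ) / ((n.choose r : ℕ) : ℝ)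
      gcongr
      exact_mod_cast blowup_count_le_exNum r 𝓕 hFne hcov H hhom hH
        (fun v => ⌊(n : ℝ) * w v⌋₊) n (htot n)
    have h2 : Filter.Tendsto
        (fun n : ℕ => ∑ e0 ∈ H.edges, ∏ v ∈ e0, (⌊(n : ℝ) * w v⌋₊ : ℝ) / (n : ℝ))
        Filter.atTop (nhds (∑ e0 ∈ H.edges, ∏ v ∈ e0, w v)) :=
      tendsto_finset_sum _ (fun e0 _ => tendsto_finset_prod _
        (fun v _ => floor_div_tendsto (w v) (hw0 v)))
    have h4 := h2.mul (pow_div_choose_tendsto r)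
    have hcten : Filter.Tendsto c Filter.atTop
        (nhds ((∑ e0 ∈ H.edges, ∏ v ∈ e0, w v) * (r.factorial : ℝ))) := by
      apply h4.congr'
      filter_upwards [Filter.eventually_ge_atTop r] with n hn
      have hn1 : 1 ≤ n := le_trans (by omega) hn
      have hn0 : (n : ℝ) ≠ 0 := by
        have : (0:ℝ) < (n:ℝ) := by exact_mod_cast hn1
        exact this.ne'
      have hC0 : ((n.choose r : ℕ) : ℝ) ≠ 0 := by
        exact_mod_cast (Nat.choose_pos hn).ne'
      have hprod : ∀ e0 ∈ H.edges,
          ∏ v ∈ e0, ((⌊(n : ℝ) * w v⌋₊ : ℝ) / (n : ℝ))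
            = (∏ v ∈ e0, (⌊(n : ℝ) * w v⌋₊ : ℝ)) / (n : ℝ) ^ r := by
        intro e0 he0
        rw [Finset.prod_div_distrib, Finset.prod_const, hH e0 he0]
      show _ = ((∑ e0 ∈ H.edges, ∏ v ∈ e0, ⌊(n : ℝ) * w v⌋₊ : ℕ) : ℝ) / ((n.choose r : ℕ) : ℝ)
      push_cast
      rw [Finset.sum_congr rfl hprod, ← Finset.sum_div]
      field_simp
    exact le_of_tendsto_of_tendsto hcten hA (Filter.eventually_atTop.mpr ⟨r, hcle⟩)
  by_cases hne : S.Nonempty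
  · have hs := csSup_le hne hub
    calc (r.factorial : ℝ) * sSup S ≤ (r.factorial : ℝ) * (A / (r.factorial : ℝ)) :=
          mul_le_mul_of_nonneg_left hs (by positivity)
      _ = A := by field_simp
  · rw [Set.not_nonempty_iff_eq_empty] at hne
    rw [hne, Real.sSup_empty, mul_zero]
    exact hA0
end

section
/- Let X_1,…,X_n be discrete, finitely supported random variables taking values in a common set, and let a be a positive integer such that X_1,…,X_n have (a+1)-wise disjoint supports. Then there exist weights w_1,…,w_n ≥ 0 with ∑_{i=1}^n w_i = 1 such that the mixture Z of X_1,…,X_n with these weights satisfies ∑_{i=1}^n 2^{H(X_i)} ≤ a·2^{H(Z)}. -/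
open Finset

lemma jensen_aux {ι : Type*} (t : Finset ι) (ht : t.Nonempty) (u : ι → ℝ)
    (hu : ∀ i ∈ t, 0 ≤ u i) :
    (∑ i ∈ t, u i) * Real.log ((∑ i ∈ t, u i) / t.card) ≤
      ∑ i ∈ t, u i * Real.log (u i) := by
  have hm : (0 : ℝ) < t.card := by exact_mod_cast Finset.card_pos.2 ht
  have h := (Real.convexOn_mul_log).map_sum_le (t := t) (w := fun _ => (t.card : ℝ)⁻¹)
    (p := u) (fun i _ => by positivity)
    (by rw [Finset.sum_const, nsmul_eq_mul]; field_simp) (fun i hi => hu i hi)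
  simp only [smul_eq_mul, ← Finset.mul_sum] at h
  have hdiv : (∑ i ∈ t, u i) / (t.card : ℝ) = (t.card : ℝ)⁻¹ * ∑ i ∈ t, u i := by ring
  rw [hdiv]
  have key : (∑ i ∈ t, u i) * Real.log ((t.card : ℝ)⁻¹ * ∑ i ∈ t, u i) =
      (t.card : ℝ) * (((t.card : ℝ)⁻¹ * ∑ i ∈ t, u i) *
        Real.log ((t.card : ℝ)⁻¹ * ∑ i ∈ t, u i)) := by
    field_simp
  rw [key]
  calc (t.card : ℝ) * (((t.card : ℝ)⁻¹ * ∑ i ∈ t, u i) *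
        Real.log ((t.card : ℝ)⁻¹ * ∑ i ∈ t, u i))
      ≤ (t.card : ℝ) * ((t.card : ℝ)⁻¹ * ∑ i ∈ t, u i * Real.log (u i)) :=
        mul_le_mul_of_nonneg_left h hm.le
    _ = ∑ i ∈ t, u i * Real.log (u i) := by field_simp

lemma support_log_bound {n : ℕ} (a : ℕ) (ha : 1 ≤ a) (u : Fin n → ℝ)
    (hu : ∀ i, 0 ≤ u i)
    (hcard : (Finset.univ.filter (fun i => u i ≠ 0)).card ≤ a) :
    (∑ i, u i) * Real.log ((∑ i, u i) / a) ≤ ∑ i, u i * Real.log (u i) := by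
  classical
  set t := Finset.univ.filter (fun i => u i ≠ 0) with ht
  have hsum : ∑ i ∈ t, u i = ∑ i, u i := Finset.sum_filter_ne_zero _
  have hsum2 : ∑ i ∈ t, u i * Real.log (u i) = ∑ i, u i * Real.log (u i) := by
    refine Finset.sum_subset (Finset.filter_subset _ _) ?_
    intro i _ hi
    have : u i = 0 := by simpa [ht] using hi
    simp [this]
  rcases t.eq_empty_or_nonempty with h0 | hne
  · have : ∑ i, u i = 0 := by rw [← hsum, h0, Finset.sum_empty]
    rw [this, ← hsum2, h0, Finset.sum_empty, zero_mul]
  · have hq : 0 < ∑ i ∈ t, u i := by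
      refine Finset.sum_pos (fun i hi => ?_) hne
      have := (Finset.mem_filter.1 hi).2
      exact lt_of_le_of_ne (hu i) (Ne.symm this)
    have hmcard : (0 : ℝ) < t.card := by exact_mod_cast Finset.card_pos.2 hne
    have hac : (t.card : ℝ) ≤ (a : ℝ) := by exact_mod_cast hcard
    have h1 : (∑ i ∈ t, u i) / (a : ℝ) ≤ (∑ i ∈ t, u i) / t.card :=
      div_le_div_of_nonneg_left hq.le hmcard hac
    have ha0 : (0 : ℝ) < (a : ℝ) := by exact_mod_cast ha
    have h2 : Real.log ((∑ i ∈ t, u i) / a) ≤ Real.log ((∑ i ∈ t, u i) / t.card) :=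
      Real.log_le_log (div_pos hq ha0) h1
    calc (∑ i, u i) * Real.log ((∑ i, u i) / a)
        = (∑ i ∈ t, u i) * Real.log ((∑ i ∈ t, u i) / a) := by rw [hsum]
      _ ≤ (∑ i ∈ t, u i) * Real.log ((∑ i ∈ t, u i) / t.card) :=
          mul_le_mul_of_nonneg_left h2 hq.le
      _ ≤ ∑ i ∈ t, u i * Real.log (u i) := jensen_aux t hne u (fun i _ => hu i)
      _ = ∑ i, u i * Real.log (u i) := hsum2

lemma ent_eq_div {α : Type*} (S : Finset α) (f : α → ℝ) :
    ent S f = (∑ x ∈ S, -(f x * Real.log (f x))) / Real.log 2 := by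
  unfold ent Real.logb
  rw [Finset.sum_div]
  exact Finset.sum_congr rfl fun x _ => by ring

/-- **Lemma 2.4 (mixture bound).** Let `X_1, …, X_n` be finitely supported discrete
random variables (given by their distributions `p i` on `S`) with `(a+1)`-wise disjoint
supports (no point is in the support of more than `a` of them). Then there is a mixture
`Z` of `X_1, …, X_n` (with weights `w`) such that `∑_i 2^{H(X_i)} ≤ a · 2^{H(Z)}`. -/
theorem mixture_bound {α : Type*} [DecidableEq α] (n : ℕ) (hn : 1 ≤ n) (S : Finset α)
    (p : Fin n → α → ℝ) (hp0 : ∀ i x, 0 ≤ p i x)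
    (hpsum : ∀ i, ∑ x ∈ S, p i x = 1)
    (hsupp : ∀ i x, p i x ≠ 0 → x ∈ S)
    (a : ℕ) (ha : 1 ≤ a)
    (hdisj : ∀ x : α, ∀ s : Finset (Fin n), (∀ i ∈ s, p i x ≠ 0) → s.card ≤ a) :
    ∃ w : Fin n → ℝ, (∀ i, 0 ≤ w i) ∧ (∑ i, w i) = 1 ∧
      (∑ i, (2 : ℝ) ^ ent S (p i)) ≤
        (a : ℝ) * (2 : ℝ) ^ ent S (fun x => ∑ i, w i * p i x) := by
  classical
  have hlog2 : (0 : ℝ) < Real.log 2 := Real.log_pos one_lt_two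
  have ha0 : (0 : ℝ) < (a : ℝ) := by exact_mod_cast ha
  set s : ℝ := ∑ i, (2 : ℝ) ^ ent S (p i) with hs_def
  have hs : 0 < s := by
    have : Nonempty (Fin n) := ⟨⟨0, hn⟩⟩
    exact Finset.sum_pos (fun i _ => Real.rpow_pos_of_pos two_pos _) Finset.univ_nonempty
  set w : Fin n → ℝ := fun i => (2 : ℝ) ^ ent S (p i) / s with hw_def
  have hw : ∀ i, 0 < w i := fun i => div_pos (Real.rpow_pos_of_pos two_pos _) hs
  have hwsum : ∑ i, w i = 1 := by
    rw [hw_def, ← Finset.sum_div, ← hs_def, div_self hs.ne']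
  refine ⟨w, fun i => (hw i).le, hwsum, ?_⟩
  set q : α → ℝ := fun x => ∑ i, w i * p i x with hq_def
  have hq0 : ∀ x, 0 ≤ q x := fun x =>
    Finset.sum_nonneg fun i _ => mul_nonneg (hw i).le (hp0 i x)
  have hq1 : ∑ x ∈ S, q x = 1 := by
    rw [hq_def]
    simp only
    rw [Finset.sum_comm]
    calc ∑ i, ∑ x ∈ S, w i * p i x = ∑ i, w i * ∑ x ∈ S, p i x := by
          exact Finset.sum_congr rfl fun i _ => by rw [Finset.mul_sum]
      _ = ∑ i, w i := by simp [hpsum]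
      _ = 1 := hwsum
  have hlogw : ∀ i, Real.log (w i) = ent S (p i) * Real.log 2 - Real.log s := by
    intro i
    rw [hw_def]
    simp only
    rw [Real.log_div (Real.rpow_pos_of_pos two_pos _).ne' hs.ne',
      Real.log_rpow two_pos]
  have hnatent : ∀ i, ∑ x ∈ S, p i x * Real.log (p i x) = -(ent S (p i) * Real.log 2) := by
    intro i
    have h1 : ∑ x ∈ S, -(p i x * Real.log (p i x)) = ent S (p i) * Real.log 2 := by
      rw [ent_eq_div]; field_simp
    have h2 : ∑ x ∈ S, -(p i x * Real.log (p i x)) =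
        -∑ x ∈ S, p i x * Real.log (p i x) := by rw [Finset.sum_neg_distrib]
    linarith [h1, h2.symm ▸ h1]
  -- pointwise bound via Jensen
  have key : ∑ x ∈ S, q x * Real.log (q x / a) ≤
      ∑ x ∈ S, ∑ i, (w i * p i x) * Real.log (w i * p i x) := by
    refine Finset.sum_le_sum fun x _ => ?_
    refine support_log_bound a ha (fun i => w i * p i x)
      (fun i => mul_nonneg (hw i).le (hp0 i x)) ?_
    refine hdisj x _ fun i hi => ?_
    have := (Finset.mem_filter.1 hi).2
    intro hp
    exact this (by show w i * p i x = 0; rw [hp, mul_zero])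
  have lhs_eq : ∑ x ∈ S, q x * Real.log (q x / a) =
      (∑ x ∈ S, q x * Real.log (q x)) - Real.log a := by
    have hterm : ∀ x ∈ S, q x * Real.log (q x / a) =
        q x * Real.log (q x) - q x * Real.log a := by
      intro x _
      by_cases h : q x = 0
      · simp [h]
      · rw [Real.log_div h ha0.ne']; ring
    rw [Finset.sum_congr rfl hterm, Finset.sum_sub_distrib, ← Finset.sum_mul, hq1, one_mul]
  have rhs_eq : ∑ x ∈ S, ∑ i, (w i * p i x) * Real.log (w i * p i x) = -Real.log s := by
    rw [Finset.sum_comm]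
    have hinner : ∀ i : Fin n, ∑ x ∈ S, (w i * p i x) * Real.log (w i * p i x) =
        w i * Real.log (w i) - w i * (ent S (p i) * Real.log 2) := by
      intro i
      have hterm : ∀ x ∈ S, (w i * p i x) * Real.log (w i * p i x) =
          w i * (p i x * Real.log (w i)) + w i * (p i x * Real.log (p i x)) := by
        intro x _
        by_cases h : p i x = 0
        · simp [h]
        · rw [Real.log_mul (hw i).ne' h]; ring
      rw [Finset.sum_congr rfl hterm, Finset.sum_add_distrib, ← Finset.mul_sum,
        ← Finset.mul_sum, ← Finset.sum_mul, hpsum i, hnatent i]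
      ring
    rw [Finset.sum_congr rfl fun i _ => hinner i]
    have : ∀ i : Fin n, w i * Real.log (w i) - w i * (ent S (p i) * Real.log 2) =
        -(w i * Real.log s) := by
      intro i; rw [hlogw i]; ring
    rw [Finset.sum_congr rfl fun i _ => this i, Finset.sum_neg_distrib, ← Finset.sum_mul,
      hwsum, one_mul]
  -- entropy lower bound
  have hent : (Real.log s - Real.log a) / Real.log 2 ≤ ent S q := by
    rw [ent_eq_div]
    have h1 : (∑ x ∈ S, q x * Real.log (q x)) - Real.log a ≤ -Real.log s := by
      rw [← lhs_eq, ← rhs_eq]; exact key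
    have h2 : Real.log s - Real.log a ≤ ∑ x ∈ S, -(q x * Real.log (q x)) := by
      rw [Finset.sum_neg_distrib]; linarith
    exact div_le_div_of_nonneg_right h2 hlog2.le
  have hfinal : s / a ≤ (2 : ℝ) ^ ent S q := by
    have hpow : (2 : ℝ) ^ ((Real.log s - Real.log a) / Real.log 2) ≤ (2 : ℝ) ^ ent S q :=
      Real.rpow_le_rpow_of_exponent_le one_le_two hent
    have heq : (2 : ℝ) ^ ((Real.log s - Real.log a) / Real.log 2) = s / a := by
      have : (Real.log s - Real.log a) / Real.log 2 = Real.logb 2 (s / a) := by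
        rw [Real.logb, Real.log_div hs.ne' ha0.ne']
      rw [this, Real.rpow_logb two_pos (by norm_num) (div_pos hs ha0)]
    rwa [heq] at hpow
  calc s = (a : ℝ) * (s / a) := by field_simp
    _ ≤ (a : ℝ) * (2 : ℝ) ^ ent S q := mul_le_mul_of_nonneg_left hfinal ha0.le
end
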